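/- arXiv:1305.5955 — 6 statements merged into one kernel-verified Lean document; each statement's English description precedes it below -/
import Mathlib

section
/- Let (G,p) be an r-dimensional tensegrity framework on n vertices in ℝ^r with r ≤ n−2. Suppose (1) there exists a proper positive semidefinite stress matrix Ω of (G,p) of rank n−r−1, and (2) there does not exist a tensegrity framework (G,q) in ℝ^r that is affinely-dominated by, but not congruent to, (G,p). Then (G,p) is universally rigid. -/
open Matrix BigOperators

noncomputable section

/-- Squared Euclidean distance between two points of `ℝ^r`. -/
def sqDist {r : ℕ} (x y : Fin r → ℝ) : ℝ := ∑ k, (x k - y k) ^ 2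

/-- `(G,q)` is dominated by `(G,p)`, where the edges of `G` are partitioned into
bars `B`, cables `C` and struts `S`. -/
def Dominates {n r s : ℕ} (B C S : Set (Fin n × Fin n))
    (p : Fin n → Fin r → ℝ) (q : Fin n → Fin s → ℝ) : Prop :=
  (∀ e ∈ B, sqDist (q e.1) (q e.2) = sqDist (p e.1) (p e.2)) ∧
  (∀ e ∈ C, sqDist (q e.1) (q e.2) ≤ sqDist (p e.1) (p e.2)) ∧
  (∀ e ∈ S, sqDist (p e.1) (p e.2) ≤ sqDist (q e.1) (q e.2))

/-- `(G,q)` is congruent to `(G,p)`. -/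
def FrameworkCongruent {n r s : ℕ} (p : Fin n → Fin r → ℝ) (q : Fin n → Fin s → ℝ) : Prop :=
  ∀ i j, sqDist (q i) (q j) = sqDist (p i) (p j)

/-- `(G,p)` is universally rigid: every framework `(G,q)` in any dimension `s`
dominated by `(G,p)` is congruent to `(G,p)`. -/
def UniversallyRigid {n r : ℕ} (B C S : Set (Fin n × Fin n))
    (p : Fin n → Fin r → ℝ) : Prop :=
  ∀ (s : ℕ) (q : Fin n → Fin s → ℝ), Dominates B C S p q → FrameworkCongruent p q

/-- `(G,q)` is affinely-dominated by `(G,p)`: dominated and `q^i = A p^i + b`. -/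
def AffinelyDominated {n r : ℕ} (B C S : Set (Fin n × Fin n))
    (p q : Fin n → Fin r → ℝ) : Prop :=
  Dominates B C S p q ∧
  ∃ (A : Matrix (Fin r) (Fin r) ℝ) (b : Fin r → ℝ), ∀ i, q i = A.mulVec (p i) + b

/-- `ω` is an equilibrium stress of the framework with edge set `E` and configuration `p`. -/
def IsStress {n r : ℕ} (E : Set (Fin n × Fin n)) (p : Fin n → Fin r → ℝ)
    (ω : Fin n → Fin n → ℝ) : Prop :=
  (∀ i j, ω i j = ω j i) ∧ (∀ i j, (i, j) ∉ E → ω i j = 0) ∧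
  (∀ i : Fin n, ∑ j, ω i j • (p i - p j) = 0)

/-- A stress is proper if `ω_ij ≥ 0` on cables and `ω_ij ≤ 0` on struts. -/
def IsProperStress {n : ℕ} (C S : Set (Fin n × Fin n)) (ω : Fin n → Fin n → ℝ) : Prop :=
  (∀ e ∈ C, 0 ≤ ω e.1 e.2) ∧ (∀ e ∈ S, ω e.1 e.2 ≤ 0)

/-- The stress matrix `Ω` associated to the stress `ω`. -/
def stressMatrix {n : ℕ} (ω : Fin n → Fin n → ℝ) : Matrix (Fin n) (Fin n) ℝ :=
  Matrix.of fun i j => if i = j then ∑ k, ω i k else -ω i j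

/-- `B`, `C`, `S` are the (symmetrically encoded) bars, cables and struts of a
simple connected tensegrity graph on `{1,…,n}`. -/
def TensegrityGraph {n : ℕ} (B C S : Set (Fin n × Fin n)) : Prop :=
  (∀ i j, (i, j) ∈ B → (j, i) ∈ B) ∧ (∀ i j, (i, j) ∈ C → (j, i) ∈ C) ∧
  (∀ i j, (i, j) ∈ S → (j, i) ∈ S) ∧ (∀ i : Fin n, (i, i) ∉ B ∪ C ∪ S) ∧
  B ∩ C = ∅ ∧ B ∩ S = ∅ ∧ C ∩ S = ∅ ∧
  (SimpleGraph.fromRel fun i j => (i, j) ∈ B ∪ C ∪ S).Connected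

/-- A set of points of `ℝ^r` is in general position if every `r+1` of them are
affinely independent. -/
def SetInGeneralPosition {r : ℕ} (A : Set (Fin r → ℝ)) : Prop :=
  ∀ T : Finset (Fin r → ℝ), ↑T ⊆ A → T.card = r + 1 →
    AffineIndependent ℝ (fun x : {x // x ∈ T} => (x : Fin r → ℝ))

/-- `Z` is a Gale matrix of the configuration with matrix `P`: its columns form a
basis of the null space of the matrix obtained by stacking `Pᵀ` on top of `eᵀ`. -/
def IsGaleMatrix {n r m : ℕ} (P : Matrix (Fin n) (Fin r) ℝ)
    (Z : Matrix (Fin n) (Fin m) ℝ) : Prop :=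
  (∀ k, Pᵀ *ᵥ (fun i => Z i k) = 0) ∧ (∀ k, ∑ i, Z i k = 0) ∧
  LinearIndependent ℝ (fun k i => Z i k) ∧
  ∀ v : Fin n → ℝ, Pᵀ *ᵥ v = 0 → ∑ i, v i = 0 →
    v ∈ Submodule.span ℝ (Set.range fun k i => Z i k)

/-- `Ω` is a stress matrix of the framework with edge set `E` and configuration
matrix `P` (with centroid at the origin): it is symmetric, vanishes on missing
edges, and satisfies `Pᵀ Ω = 0` and `Ω e = 0`. -/
def IsStressMatrix {n r : ℕ} (E : Set (Fin n × Fin n)) (P : Matrix (Fin n) (Fin r) ℝ)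
    (Ω : Matrix (Fin n) (Fin n) ℝ) : Prop :=
  Ω.IsSymm ∧ (∀ i j, i ≠ j → (i, j) ∉ E → Ω i j = 0) ∧
  Pᵀ * Ω = 0 ∧ Ω *ᵥ (fun _ => (1 : ℝ)) = 0

/-- The matrix `F^{ij} = (e^i - e^j)(e^i - e^j)ᵀ`. -/
def Fmat {n : ℕ} (i j : Fin n) : Matrix (Fin n) (Fin n) ℝ :=
  Matrix.vecMulVec (Pi.single i 1 - Pi.single j 1) (Pi.single i 1 - Pi.single j 1)

/-- The matrix `E^{ij} = e^i (e^j)ᵀ + e^j (e^i)ᵀ`. -/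
def Emat {n : ℕ} (i j : Fin n) : Matrix (Fin n) (Fin n) ℝ :=
  Matrix.vecMulVec (Pi.single i 1) (Pi.single j 1) +
    Matrix.vecMulVec (Pi.single j 1) (Pi.single i 1)

/-- The matrix `L^i = e^i eᵀ + e (e^i)ᵀ`. -/
def Lmat {n : ℕ} (i : Fin n) : Matrix (Fin n) (Fin n) ℝ :=
  Matrix.vecMulVec (Pi.single i 1) (fun _ => 1) +
    Matrix.vecMulVec (fun _ => 1) (Pi.single i 1)

/-- `ℰ(y) = Σ y_ij E^{ij}` (for `y` supported on the relevant pairs `i < j`). -/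
def EscrY {n : ℕ} (y : Fin n → Fin n → ℝ) : Matrix (Fin n) (Fin n) ℝ :=
  ∑ i, ∑ j, y i j • Emat i j

/-- The vector `x = -(1/n) ℰ(y) e + (1/(2n²)) (eᵀ ℰ(y) e) e`. -/
def xvec {n : ℕ} (y : Fin n → Fin n → ℝ) : Fin n → ℝ :=
  (-(1 / (n : ℝ))) • (EscrY y *ᵥ fun _ => (1 : ℝ)) +
    ((1 / (2 * (n : ℝ) ^ 2)) * ((fun _ => (1 : ℝ)) ⬝ᵥ (EscrY y *ᵥ fun _ => (1 : ℝ)))) •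
      (fun _ : Fin n => (1 : ℝ))

/-! ### Auxiliary lemmas -/

lemma sqDist_eq_dot {r : ℕ} (x y : Fin r → ℝ) : sqDist x y = (x - y) ⬝ᵥ (x - y) := by
  simp [sqDist, dotProduct, sq]

lemma stressMatrix_mulVec_apply {n : ℕ} (ω : Fin n → Fin n → ℝ) (hdiag : ∀ i, ω i i = 0)
    (x : Fin n → ℝ) (i : Fin n) :
    (stressMatrix ω *ᵥ x) i = ∑ j, ω i j * (x i - x j) := by
  have h1 : ∀ j : Fin n, stressMatrix ω i j * x j
      = -(ω i j * x j) + (if j = i then ((∑ k, ω i k) + ω i j) * x j else 0) := by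
    intro j
    by_cases h : i = j
    · subst h; simp [stressMatrix]; ring
    · simp [stressMatrix, h, Ne.symm h]
  calc (stressMatrix ω *ᵥ x) i = ∑ j, stressMatrix ω i j * x j := rfl
    _ = ∑ j, (-(ω i j * x j) + (if j = i then ((∑ k, ω i k) + ω i j) * x j else 0)) :=
        Finset.sum_congr rfl fun j _ => h1 j
    _ = (∑ j, -(ω i j * x j)) + ((∑ k, ω i k) + ω i i) * x i := by
        rw [Finset.sum_add_distrib, Finset.sum_ite_eq' Finset.univ i
          (fun j => ((∑ k, ω i k) + ω i j) * x j)]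
        simp
    _ = ∑ j, ω i j * (x i - x j) := by
        simp only [hdiag, add_zero, mul_sub]
        rw [Finset.sum_sub_distrib, ← Finset.sum_mul, Finset.sum_neg_distrib]
        ring

lemma energy_eq {n : ℕ} (ω : Fin n → Fin n → ℝ) (hsym : ∀ i j, ω i j = ω j i)
    (hdiag : ∀ i, ω i i = 0) (x : Fin n → ℝ) :
    ∑ i, ∑ j, ω i j * (x i - x j) ^ 2 = 2 * (x ⬝ᵥ (stressMatrix ω *ᵥ x)) := by
  have hdot : x ⬝ᵥ (stressMatrix ω *ᵥ x) = ∑ i, ∑ j, ω i j * (x i - x j) * x i := by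
    simp only [dotProduct, stressMatrix_mulVec_apply ω hdiag, Finset.mul_sum]
    exact Finset.sum_congr rfl fun i _ => Finset.sum_congr rfl fun j _ => by ring
  have hswap : ∑ i, ∑ j, ω i j * (x i - x j) * x j
      = -∑ i, ∑ j, ω i j * (x i - x j) * x i := by
    rw [Finset.sum_comm, ← Finset.sum_neg_distrib]
    refine Finset.sum_congr rfl fun a _ => ?_
    rw [← Finset.sum_neg_distrib]
    refine Finset.sum_congr rfl fun b _ => ?_
    rw [hsym b a]; ring
  calc ∑ i, ∑ j, ω i j * (x i - x j) ^ 2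
      = ∑ i, ∑ j, (ω i j * (x i - x j) * x i - ω i j * (x i - x j) * x j) :=
        Finset.sum_congr rfl fun i _ => Finset.sum_congr rfl fun j _ => by ring
    _ = (∑ i, ∑ j, ω i j * (x i - x j) * x i) - ∑ i, ∑ j, ω i j * (x i - x j) * x j := by
        simp [Finset.sum_sub_distrib]
    _ = 2 * (x ⬝ᵥ (stressMatrix ω *ᵥ x)) := by rw [hswap, hdot]; ring

lemma dot_mulVec_self {m k : ℕ} (A : Matrix (Fin m) (Fin k) ℝ) (v : Fin k → ℝ) :
    (A *ᵥ v) ⬝ᵥ (A *ᵥ v) = v ⬝ᵥ ((Aᵀ * A) *ᵥ v) := by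
  conv_rhs => rw [← Matrix.mulVec_mulVec, Matrix.dotProduct_mulVec, Matrix.vecMul_transpose]

/-- Connelly: condition (1) a proper PSD stress matrix of rank `n-r-1`
and condition (2) no framework affinely-dominated by but not congruent to `(G,p)`
imply universal rigidity. -/
theorem statement0 {n r : ℕ} (hr : r ≤ n - 2)
    (B C S : Set (Fin n × Fin n)) (hG : TensegrityGraph B C S)
    (p : Fin n → Fin r → ℝ)
    (hdim : affineSpan ℝ (Set.range p) = ⊤)
    (ω : Fin n → Fin n → ℝ)
    (hstress : IsStress (B ∪ C ∪ S) p ω)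
    (hproper : IsProperStress C S ω)
    (hpsd : (stressMatrix ω).PosSemidef)
    (hrank : (stressMatrix ω).rank = n - r - 1)
    (hnoaff : ¬ ∃ q : Fin n → Fin r → ℝ,
        AffinelyDominated B C S p q ∧ ¬ FrameworkCongruent p q) :
    UniversallyRigid B C S p := by
  classical
  obtain ⟨hBsym, hCsym, hSsym, hloop, -, -, -, -⟩ := hG
  obtain ⟨hωsym, hωsupp, hωeq⟩ := hstress
  have hdiag : ∀ i, ω i i = 0 := fun i => hωsupp i i (hloop i)
  -- `Fin n` is nonempty
  have hne : Nonempty (Fin n) := by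
    have h1 : (Set.range p).Nonempty := by
      rw [← affineSpan_nonempty (k := ℝ), hdim]
      exact ⟨0, trivial⟩
    obtain ⟨-, i, -⟩ := h1
    exact ⟨i⟩
  have hn : 1 ≤ n := hne.elim fun i => i.pos
  -- kernel facts
  have hΩp : ∀ k, stressMatrix ω *ᵥ (fun i => p i k) = 0 := by
    intro k
    funext i
    rw [stressMatrix_mulVec_apply ω hdiag]
    have h := congrFun (hωeq i) k
    simpa [Finset.sum_apply, smul_eq_mul] using h
  have hΩ1 : stressMatrix ω *ᵥ (fun _ => (1 : ℝ)) = 0 := by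
    funext i
    rw [stressMatrix_mulVec_apply ω hdiag]
    simp
  -- the family of p-columns together with the all ones vector
  set v : Fin r ⊕ Unit → (Fin n → ℝ) :=
    Sum.elim (fun l => fun i => p i l) (fun _ => fun _ => (1 : ℝ)) with hv
  -- affine functionals vanishing on the configuration vanish
  have hvanish : ∀ (a : Fin r → ℝ) (b : ℝ),
      (∀ i, (∑ l, a l * p i l) + b = 0) → a = 0 ∧ b = 0 := by
    intro a b hab
    have hvs : vectorSpan ℝ (Set.range p) = ⊤ := by
      rw [← direction_affineSpan, hdim]
      exact AffineSubspace.direction_top ℝ _ _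
    let L : (Fin r → ℝ) →ₗ[ℝ] ℝ :=
      { toFun := fun x => a ⬝ᵥ x
        map_add' := fun x y => dotProduct_add a x y
        map_smul' := fun cc x => by simp [dotProduct_smul] }
    have hLzero : ∀ x : Fin r → ℝ, a ⬝ᵥ x = 0 := by
      have hsub : vectorSpan ℝ (Set.range p) ≤ LinearMap.ker L := by
        rw [vectorSpan_def]
        apply Submodule.span_le.mpr
        rintro z hz
        rw [Set.mem_vsub] at hz
        obtain ⟨x, ⟨i, rfl⟩, y, ⟨j, rfl⟩, rfl⟩ := hz
        have hii : a ⬝ᵥ p i + b = 0 := hab i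
        have hjj : a ⬝ᵥ p j + b = 0 := hab j
        have : L (p i -ᵥ p j) = 0 := by
          show a ⬝ᵥ (p i - p j) = 0
          rw [dotProduct_sub]
          linarith
        exact this
      rw [hvs, top_le_iff] at hsub
      intro x
      have : x ∈ LinearMap.ker L := by rw [hsub]; trivial
      exact this
    have ha : a = 0 := by
      funext l
      have := hLzero (Pi.single l 1)
      simpa [dotProduct_single] using this
    refine ⟨ha, ?_⟩
    obtain ⟨i⟩ := hne
    have := hab i
    simp [ha] at this
    exact this
  -- linear independence
  have hvli : LinearIndependent ℝ v := by
    rw [Fintype.linearIndependent_iff]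
    intro g hg
    have hg' : ∀ i, (∑ l, g (Sum.inl l) * p i l) + g (Sum.inr ()) = 0 := by
      intro i
      have := congrFun hg i
      simpa [hv, Fintype.sum_sum_type, Finset.sum_apply, smul_eq_mul] using this
    obtain ⟨ha, hb⟩ := hvanish (fun l => g (Sum.inl l)) (g (Sum.inr ())) hg'
    rintro (l | ⟨⟩)
    · exact congrFun ha l
    · exact hb
  -- the kernel of the stress matrix
  set K := LinearMap.ker (stressMatrix ω).mulVecLin with hK
  have hmem : ∀ x : Fin n → ℝ, stressMatrix ω *ᵥ x = 0 → x ∈ K := by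
    intro x hx
    rw [hK, LinearMap.mem_ker, Matrix.mulVecLin_apply]
    exact hx
  have hWK : Submodule.span ℝ (Set.range v) ≤ K := by
    rw [Submodule.span_le]
    rintro z ⟨(l | u), rfl⟩
    · exact hmem _ (hΩp l)
    · exact hmem _ hΩ1
  have hdimK : Module.finrank ℝ K = r + 1 := by
    have h1 := LinearMap.finrank_range_add_finrank_ker (stressMatrix ω).mulVecLin
    rw [Module.finrank_fintype_fun_eq_card, Fintype.card_fin] at h1
    have h3 : Module.finrank ℝ (LinearMap.range (stressMatrix ω).mulVecLin) = n - r - 1 :=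
      hrank
    rw [hK]
    omega
  have hspan : Submodule.span ℝ (Set.range v) = K := by
    apply Submodule.eq_of_le_of_finrank_le hWK
    rw [hdimK, finrank_span_eq_card hvli]
    simp
  -- main argument
  intro s q hdom
  obtain ⟨hdomB, hdomC, hdomS⟩ := hdom
  -- energies
  have hrw : ∀ {s' : ℕ} (x : Fin n → Fin s' → ℝ),
      ∑ i, ∑ j, ω i j * sqDist (x i) (x j)
        = ∑ k, 2 * ((fun i => x i k) ⬝ᵥ (stressMatrix ω *ᵥ fun i => x i k)) := by
    intro s' x
    simp only [sqDist, Finset.mul_sum]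
    calc ∑ i, ∑ j, ∑ k, ω i j * (x i k - x j k) ^ 2
        = ∑ i, ∑ k, ∑ j, ω i j * (x i k - x j k) ^ 2 :=
          Finset.sum_congr rfl fun i _ => Finset.sum_comm
      _ = ∑ k, ∑ i, ∑ j, ω i j * (x i k - x j k) ^ 2 := Finset.sum_comm
      _ = ∑ k, 2 * ((fun i => x i k) ⬝ᵥ (stressMatrix ω *ᵥ fun i => x i k)) :=
          Finset.sum_congr rfl fun k _ => energy_eq ω hωsym hdiag _
  have hTp : ∑ i, ∑ j, ω i j * sqDist (p i) (p j) = 0 := by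
    rw [hrw p]
    refine Finset.sum_eq_zero fun k _ => ?_
    rw [hΩp k]
    simp
  have hTq_le : ∑ i, ∑ j, ω i j * sqDist (q i) (q j)
      ≤ ∑ i, ∑ j, ω i j * sqDist (p i) (p j) := by
    refine Finset.sum_le_sum fun i _ => Finset.sum_le_sum fun j _ => ?_
    by_cases hB : (i, j) ∈ B
    · rw [hdomB (i, j) hB]
    by_cases hC : (i, j) ∈ C
    · exact mul_le_mul_of_nonneg_left (hdomC (i, j) hC) (hproper.1 (i, j) hC)
    by_cases hS : (i, j) ∈ S
    · exact mul_le_mul_of_nonpos_left (hdomS (i, j) hS) (hproper.2 (i, j) hS)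
    · have h0 : ω i j = 0 := hωsupp i j (by simp [Set.mem_union, hB, hC, hS])
      simp [h0]
  have hterm_nonneg : ∀ k : Fin s,
      0 ≤ (fun i => q i k) ⬝ᵥ (stressMatrix ω *ᵥ fun i => q i k) := by
    intro k
    have := hpsd.dotProduct_mulVec_nonneg (fun i => q i k)
    simpa using this
  have hsum0 : ∑ k : Fin s,
      2 * ((fun i => q i k) ⬝ᵥ (stressMatrix ω *ᵥ fun i => q i k)) = 0 := by
    refine le_antisymm ?_ (Finset.sum_nonneg fun k _ =>
      mul_nonneg (by norm_num) (hterm_nonneg k))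
    rw [← hrw q]
    exact hTp ▸ hTq_le
  have hcol : ∀ k : Fin s, stressMatrix ω *ᵥ (fun i => q i k) = 0 := by
    intro k
    have hall := (Finset.sum_eq_zero_iff_of_nonneg
      (fun k _ => mul_nonneg (by norm_num) (hterm_nonneg k))).mp hsum0 k (Finset.mem_univ k)
    have hz : (fun i => q i k) ⬝ᵥ (stressMatrix ω *ᵥ fun i => q i k) = 0 := by linarith
    exact (hpsd.dotProduct_mulVec_zero_iff (fun i => q i k)).mp (by simpa using hz)
  -- q-columns are affine combinations
  have hqrep : ∀ k : Fin s, ∃ cc : Fin r ⊕ Unit → ℝ,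
      ∑ l, cc l • v l = fun i => q i k := by
    intro k
    have : (fun i => q i k) ∈ Submodule.span ℝ (Set.range v) := by
      rw [hspan]; exact hmem _ (hcol k)
    exact (Submodule.mem_span_range_iff_exists_fun ℝ).mp this
  choose cc hcc using hqrep
  set A0 : Matrix (Fin s) (Fin r) ℝ := Matrix.of fun k l => cc k (Sum.inl l) with hA0
  set b0 : Fin s → ℝ := fun k => cc k (Sum.inr ()) with hb0
  have hqaff : ∀ i k, q i k = (∑ l, A0 k l * p i l) + b0 k := by
    intro i k
    have := congrFun (hcc k) i
    simpa [hv, hA0, hb0, Fintype.sum_sum_type, Finset.sum_apply, smul_eq_mul] using this.symm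
  -- construct the r-dimensional framework
  have hpsd0 : (A0ᵀ * A0).PosSemidef := by
    have := Matrix.posSemidef_conjTranspose_mul_self A0
    rwa [Matrix.conjTranspose_eq_transpose_of_trivial] at this
  set M := (open scoped MatrixOrder in CFC.sqrt (A0ᵀ * A0)) with hM
  have hMsym : Mᵀ = M := by
    have h := (open scoped MatrixOrder in (CFC.sqrt_nonneg (A0ᵀ * A0)).posSemidef).1
    rwa [Matrix.IsHermitian, Matrix.conjTranspose_eq_transpose_of_trivial] at h
  have hMM : Mᵀ * M = A0ᵀ * A0 := by
    rw [hMsym]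
    open scoped MatrixOrder in exact CFC.sqrt_mul_sqrt_self _ hpsd0.nonneg
  set q' : Fin n → Fin r → ℝ := fun i => M *ᵥ p i with hq'
  have hdist : ∀ i j, sqDist (q' i) (q' j) = sqDist (q i) (q j) := by
    intro i j
    have h1 : q' i - q' j = M *ᵥ (p i - p j) := by
      rw [hq', Matrix.mulVec_sub]
    have h2 : q i - q j = A0 *ᵥ (p i - p j) := by
      funext k
      rw [Pi.sub_apply, hqaff i k, hqaff j k]
      simp only [Matrix.mulVec, dotProduct, Pi.sub_apply, mul_sub, Finset.sum_sub_distrib]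
      ring
    rw [sqDist_eq_dot, sqDist_eq_dot, h1, h2, dot_mulVec_self, dot_mulVec_self, hMM]
  have hq'dom : Dominates B C S p q' := by
    refine ⟨fun e he => ?_, fun e he => ?_, fun e he => ?_⟩
    · rw [hdist]; exact hdomB e he
    · rw [hdist]; exact hdomC e he
    · rw [hdist]; exact hdomS e he
  have hcong' : FrameworkCongruent p q' := by
    by_contra h
    exact hnoaff ⟨q', ⟨hq'dom, M, 0, fun i => by simp [hq']⟩, h⟩
  intro i j
  rw [← hdist i j]
  exact hcong' i j
end
end

section
/- Let (G,p) be an r-dimensional tensegrity framework on n vertices in ℝ^r with r ≤ n−2. Suppose (1) (G,p) admits a proper positive semidefinite stress matrix Ω with rank n−r−1, and (2) for each vertex i, the set {p^i} ∪ {p^j : {i,j} ∈ B ∪ C* ∪ S*} affinely spans ℝ^r, where C* = {{i,j}∈C : ω_ij ≠ 0} and S* = {{i,j}∈S : ω_ij ≠ 0} for the proper stress ω associated with Ω. Then (G,p) is universally rigid. -/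
open Matrix BigOperators

noncomputable section

section AuxST

variable {n r : ℕ}

lemma stressMatrix_row_eq (ω : Fin n → Fin n → ℝ) (hdiag : ∀ i, ω i i = 0)
    (x : Fin n → ℝ) (i : Fin n) :
    (stressMatrix ω *ᵥ x) i = (∑ k, ω i k) * x i - ∑ j, ω i j * x j := by
  have hterm : ∀ j, stressMatrix ω i j * x j
      = (if i = j then (∑ k, ω i k) * x j else 0) - ω i j * x j := by
    intro j
    by_cases h : i = j
    · subst h; simp [stressMatrix, hdiag i]
    · simp [stressMatrix, h, neg_mul]
  show ∑ j, stressMatrix ω i j * x j = _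
  rw [Finset.sum_congr rfl fun j _ => hterm j, Finset.sum_sub_distrib,
    Finset.sum_ite_eq]
  simp

lemma energy_single (ω : Fin n → Fin n → ℝ) (hsymm : ∀ i j, ω i j = ω j i)
    (hdiag : ∀ i, ω i i = 0) (x : Fin n → ℝ) :
    ∑ i, ∑ j, ω i j * (x i - x j)^2
      = 2 * (x ⬝ᵥ (stressMatrix ω *ᵥ x)) := by
  have hdot : x ⬝ᵥ (stressMatrix ω *ᵥ x)
      = ∑ i, ((∑ k, ω i k) * x i * x i) - ∑ i, ∑ j, ω i j * x i * x j := by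
    rw [dotProduct, ← Finset.sum_sub_distrib]
    refine Finset.sum_congr rfl fun i _ => ?_
    rw [stressMatrix_row_eq ω hdiag x i, mul_sub, Finset.mul_sum]
    congr 1
    · ring
    · exact Finset.sum_congr rfl fun j _ => by ring
  have hswap : ∑ i, ∑ j, ω i j * x j ^ 2 = ∑ i, ∑ j, ω i j * x i ^ 2 := by
    rw [Finset.sum_comm]
    exact Finset.sum_congr rfl fun i _ => Finset.sum_congr rfl fun j _ => by
      rw [hsymm j i]
  have hexp : ∑ i, ∑ j, ω i j * (x i - x j)^2
      = (∑ i, ∑ j, ω i j * x i ^ 2) + (∑ i, ∑ j, ω i j * x j ^ 2)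
        - 2 * ∑ i, ∑ j, ω i j * x i * x j := by
    calc ∑ i, ∑ j, ω i j * (x i - x j)^2
        = ∑ i, ∑ j, (ω i j * x i^2 + ω i j * x j^2 - 2*(ω i j * x i * x j)) :=
          Finset.sum_congr rfl fun i _ => Finset.sum_congr rfl fun j _ => by ring
      _ = (∑ i, ∑ j, ω i j * x i ^ 2) + (∑ i, ∑ j, ω i j * x j ^ 2)
        - 2 * ∑ i, ∑ j, ω i j * x i * x j := by
          simp only [Finset.sum_add_distrib, Finset.sum_sub_distrib, Finset.mul_sum]
  have hsig : ∑ i, ∑ j, ω i j * x i ^ 2 = ∑ i, ((∑ k, ω i k) * x i * x i) := by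
    refine Finset.sum_congr rfl fun i _ => ?_
    rw [Finset.sum_mul, Finset.sum_mul]
    exact Finset.sum_congr rfl fun j _ => by ring
  rw [hexp, hswap, hsig, hdot]
  ring

lemma energy_total {s' : ℕ} (ω : Fin n → Fin n → ℝ) (hsymm : ∀ i j, ω i j = ω j i)
    (hdiag : ∀ i, ω i i = 0) (q : Fin n → Fin s' → ℝ) :
    ∑ i, ∑ j, ω i j * (∑ k, (q i k - q j k)^2)
      = ∑ k, 2 * ((fun i => q i k) ⬝ᵥ (stressMatrix ω *ᵥ (fun i => q i k))) := by
  calc ∑ i, ∑ j, ω i j * (∑ k, (q i k - q j k)^2)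
      = ∑ i, ∑ j, ∑ k, ω i j * (q i k - q j k)^2 := by
        exact Finset.sum_congr rfl fun i _ => Finset.sum_congr rfl fun j _ => by
          rw [Finset.mul_sum]
    _ = ∑ i, ∑ k, ∑ j, ω i j * (q i k - q j k)^2 :=
        Finset.sum_congr rfl fun i _ => by rw [Finset.sum_comm]
    _ = ∑ k, ∑ i, ∑ j, ω i j * (q i k - q j k)^2 := by rw [Finset.sum_comm]
    _ = ∑ k, 2 * ((fun i => q i k) ⬝ᵥ (stressMatrix ω *ᵥ (fun i => q i k))) :=
        Finset.sum_congr rfl fun k _ => energy_single ω hsymm hdiag _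

lemma dot_eq_zero_of_span (c : Fin r → ℝ) (s : Set (Fin r → ℝ))
    (hspan : Submodule.span ℝ s = ⊤) (h : ∀ v ∈ s, v ⬝ᵥ c = 0) : c = 0 := by
  let f : (Fin r → ℝ) →ₗ[ℝ] ℝ :=
    { toFun := fun v => v ⬝ᵥ c
      map_add' := fun x y => add_dotProduct x y c
      map_smul' := fun t x => smul_dotProduct t x c }
  have hle : Submodule.span ℝ s ≤ LinearMap.ker f := Submodule.span_le.2 h
  have : f c = 0 := hle (hspan ▸ Submodule.mem_top)
  exact dotProduct_self_eq_zero.mp this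

/-- The affine evaluation map `(c, c₀) ↦ (i ↦ ⟨p i, c⟩ + c₀)`. -/
def affMap (p : Fin n → Fin r → ℝ) : ((Fin r → ℝ) × ℝ) →ₗ[ℝ] (Fin n → ℝ) where
  toFun := fun cc => fun i => p i ⬝ᵥ cc.1 + cc.2
  map_add' := by
    intro x y; funext i
    simp [dotProduct_add]; ring
  map_smul' := by
    intro t x; funext i
    simp [dotProduct_smul, smul_eq_mul]; ring

lemma affMap_apply (p : Fin n → Fin r → ℝ) (cc : (Fin r → ℝ) × ℝ) (i : Fin n) :
    affMap p cc i = p i ⬝ᵥ cc.1 + cc.2 := rfl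

lemma affMap_inj (hn : 0 < n) (p : Fin n → Fin r → ℝ)
    (hdim : affineSpan ℝ (Set.range p) = ⊤) : Function.Injective (affMap p) := by
  rw [← LinearMap.ker_eq_bot, LinearMap.ker_eq_bot']
  rintro ⟨c, c0⟩ h
  have hvs : vectorSpan ℝ (Set.range p) = ⊤ := by
    rw [← direction_affineSpan, hdim]
    exact AffineSubspace.direction_top ℝ _ _
  have hc : c = 0 := by
    apply dot_eq_zero_of_span c (Set.range p -ᵥ Set.range p)
    · rw [← vectorSpan_def]; exact hvs
    · intro v hv
      rw [Set.mem_vsub] at hv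
      obtain ⟨x, ⟨i, rfl⟩, y, ⟨j, rfl⟩, rfl⟩ := hv
      have hi := congrFun h i
      have hj := congrFun h j
      rw [affMap_apply] at hi hj
      simp only [Pi.zero_apply] at hi hj
      show (p i - p j) ⬝ᵥ c = 0
      rw [sub_dotProduct]
      linarith
  have hc0 : c0 = 0 := by
    have hi := congrFun h ⟨0, hn⟩
    rw [affMap_apply] at hi
    simp only [Pi.zero_apply, hc] at hi
    simpa using hi
  simp [Prod.ext_iff, hc, hc0]

/-- The bilinear form `⟨u, (AᵀA - I) v⟩` associated with coefficient vectors `a`. -/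
def Fbil {r s : ℕ} (a : Fin s → Fin r → ℝ) (u v : Fin r → ℝ) : ℝ :=
  (∑ k, (u ⬝ᵥ a k) * (v ⬝ᵥ a k)) - u ⬝ᵥ v

/-- The vector `(AᵀA - I) u`. -/
def gvec {r s : ℕ} (a : Fin s → Fin r → ℝ) (u : Fin r → ℝ) : Fin r → ℝ :=
  fun l => (∑ k, (u ⬝ᵥ a k) * a k l) - u l

lemma gvec_dot {s : ℕ} (a : Fin s → Fin r → ℝ) (u v : Fin r → ℝ) :
    gvec a u ⬝ᵥ v = Fbil a u v := by
  show ∑ l, ((∑ k, (u ⬝ᵥ a k) * a k l) - u l) * v l = _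
  simp only [sub_mul]
  rw [Finset.sum_sub_distrib, Fbil]
  congr 1
  calc ∑ l, (∑ k, (u ⬝ᵥ a k) * a k l) * v l
      = ∑ l, ∑ k, (u ⬝ᵥ a k) * a k l * v l :=
        Finset.sum_congr rfl fun l _ => Finset.sum_mul _ _ _
    _ = ∑ k, ∑ l, (u ⬝ᵥ a k) * a k l * v l := by rw [Finset.sum_comm]
    _ = ∑ k, (u ⬝ᵥ a k) * (v ⬝ᵥ a k) := Finset.sum_congr rfl fun k _ => by
        rw [show (v ⬝ᵥ a k) = ∑ l, v l * a k l from rfl, Finset.mul_sum]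
        exact Finset.sum_congr rfl fun l _ => by ring

lemma Fbil_comm {s : ℕ} (a : Fin s → Fin r → ℝ) (u v : Fin r → ℝ) :
    Fbil a u v = Fbil a v u := by
  rw [Fbil, Fbil, dotProduct_comm]
  congr 1
  exact Finset.sum_congr rfl fun k _ => by ring

lemma Fbil_sub_right {s : ℕ} (a : Fin s → Fin r → ℝ) (u x y : Fin r → ℝ) :
    Fbil a u (x - y) = Fbil a u x - Fbil a u y := by
  simp only [Fbil, sub_dotProduct, dotProduct_sub, mul_sub, Finset.sum_sub_distrib]
  ring

lemma gvec_sub {s : ℕ} (a : Fin s → Fin r → ℝ) (u v : Fin r → ℝ) :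
    gvec a (u - v) = gvec a u - gvec a v := by
  funext l
  simp only [gvec, sub_dotProduct, sub_mul, Finset.sum_sub_distrib, Pi.sub_apply]
  ring

lemma Fbil_expand {s : ℕ} (a : Fin s → Fin r → ℝ) (u v : Fin r → ℝ) :
    Fbil a (u - v) (u - v) = Fbil a u u - 2 * Fbil a u v + Fbil a v v := by
  rw [← gvec_dot, gvec_sub, sub_dotProduct, gvec_dot, gvec_dot,
    Fbil_sub_right, Fbil_sub_right, Fbil_comm a v u]
  ring

end AuxST


/-- tensegrity framework with proper PSD stress matrix of rank `n-r-1`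
such that each point together with its neighbors via bars and stressed cables/struts
affinely spans `ℝ^r` is universally rigid. -/
theorem statement2 {n r : ℕ} (hr : r ≤ n - 2)
    (B C S : Set (Fin n × Fin n)) (hG : TensegrityGraph B C S)
    (p : Fin n → Fin r → ℝ)
    (hdim : affineSpan ℝ (Set.range p) = ⊤)
    (ω : Fin n → Fin n → ℝ)
    (hstress : IsStress (B ∪ C ∪ S) p ω)
    (hproper : IsProperStress C S ω)
    (hpsd : (stressMatrix ω).PosSemidef)
    (hrank : (stressMatrix ω).rank = n - r - 1)
    (hspan : ∀ i : Fin n,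
      affineSpan ℝ (insert (p i) (p '' {j | (i, j) ∈ B ∨
        ((i, j) ∈ C ∧ ω i j ≠ 0) ∨ ((i, j) ∈ S ∧ ω i j ≠ 0)})) = ⊤) :
    UniversallyRigid B C S p := by
  obtain ⟨hωs, hωoff, hωeq⟩ := hstress
  have hloop : ∀ i : Fin n, (i, i) ∉ B ∪ C ∪ S := hG.2.2.2.1
  have hdiag : ∀ i, ω i i = 0 := fun i => hωoff i i (hloop i)
  intro s q hdom
  rcases Nat.lt_or_ge n 2 with hn | hn
  · have hsub : Subsingleton (Fin n) := Fin.subsingleton_iff_le_one.mpr (by omega)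
    intro i j
    have hij : i = j := Subsingleton.elim i j
    subst hij
    simp [sqDist]
  · have hrn : r + 2 ≤ n := by omega
    -- first moments of the stress
    have hKp' : ∀ (i : Fin n) (l : Fin r), ∑ j, ω i j * p j l = (∑ k, ω i k) * p i l := by
      intro i l
      have h0 := congrFun (hωeq i) l
      have h1 : ∑ j, (ω i j * p i l - ω i j * p j l) = 0 := by
        simpa [Finset.sum_apply, mul_sub] using h0
      rw [Finset.sum_sub_distrib, ← Finset.sum_mul] at h1
      linarith
    have hmom : ∀ (i : Fin n) (v : Fin r → ℝ),
        ∑ j, ω i j * (p j ⬝ᵥ v) = (∑ k, ω i k) * (p i ⬝ᵥ v) := by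
      intro i v
      calc ∑ j, ω i j * (p j ⬝ᵥ v) = ∑ j, ∑ l, ω i j * p j l * v l :=
            Finset.sum_congr rfl fun j _ => by
              rw [dotProduct, Finset.mul_sum]
              exact Finset.sum_congr rfl fun l _ => by ring
        _ = ∑ l, ∑ j, ω i j * p j l * v l := by rw [Finset.sum_comm]
        _ = ∑ l, (∑ k, ω i k) * p i l * v l := Finset.sum_congr rfl fun l _ => by
              rw [← Finset.sum_mul, hKp' i l]
        _ = (∑ k, ω i k) * (p i ⬝ᵥ v) := by
              rw [show (p i ⬝ᵥ v) = ∑ l, p i l * v l from rfl, Finset.mul_sum]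
              exact Finset.sum_congr rfl fun l _ => by ring
    have hKp : ∀ l, stressMatrix ω *ᵥ (fun i => p i l) = 0 := by
      intro l; funext i
      rw [stressMatrix_row_eq ω hdiag, hKp' i l]
      simp
    -- energies
    have hEp : ∑ i, ∑ j, ω i j * sqDist (p i) (p j) = 0 := by
      rw [show (∑ i, ∑ j, ω i j * sqDist (p i) (p j))
          = ∑ i, ∑ j, ω i j * (∑ k, (p i k - p j k)^2) from rfl,
        energy_total ω hωs hdiag p]
      refine Finset.sum_eq_zero fun k _ => ?_
      rw [hKp k]
      simp
    have hEq2 : ∑ i, ∑ j, ω i j * sqDist (q i) (q j)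
        = ∑ k, 2 * ((fun i => q i k) ⬝ᵥ (stressMatrix ω *ᵥ (fun i => q i k))) :=
      energy_total ω hωs hdiag q
    have hedge : ∀ i j, ω i j ≠ 0 → (i, j) ∈ B ∪ C ∪ S := fun i j h => by
      by_contra hc; exact h (hωoff i j hc)
    have ht : ∀ i j, 0 ≤ ω i j * (sqDist (p i) (p j) - sqDist (q i) (q j)) := by
      intro i j
      by_cases h0 : ω i j = 0
      · simp [h0]
      · rcases hedge i j h0 with (hB | hC) | hS
        · rw [hdom.1 (i, j) hB]; simp
        · exact mul_nonneg (hproper.1 (i, j) hC) (sub_nonneg.2 (hdom.2.1 (i, j) hC))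
        · have h1 : ω i j ≤ 0 := hproper.2 (i, j) hS
          have h2 : sqDist (p i) (p j) - sqDist (q i) (q j) ≤ 0 :=
            sub_nonpos.2 (hdom.2.2 (i, j) hS)
          nlinarith
    have hqnn : ∀ k ∈ (Finset.univ : Finset (Fin s)),
        0 ≤ 2 * ((fun i => q i k) ⬝ᵥ (stressMatrix ω *ᵥ (fun i => q i k))) := by
      intro k _
      have h := hpsd.dotProduct_mulVec_nonneg (fun i => q i k)
      have h' : (0:ℝ) ≤ (fun i => q i k) ⬝ᵥ (stressMatrix ω *ᵥ (fun i => q i k)) := by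
        simpa using h
      linarith
    have hsum : ∑ i, ∑ j, ω i j * (sqDist (p i) (p j) - sqDist (q i) (q j))
        = - ∑ k, 2 * ((fun i => q i k) ⬝ᵥ (stressMatrix ω *ᵥ (fun i => q i k))) := by
      have e1 : ∀ i : Fin n, ∑ j, ω i j * (sqDist (p i) (p j) - sqDist (q i) (q j))
          = ∑ j, ω i j * sqDist (p i) (p j) - ∑ j, ω i j * sqDist (q i) (q j) := by
        intro i
        rw [← Finset.sum_sub_distrib]
        exact Finset.sum_congr rfl fun j _ => mul_sub _ _ _
      calc ∑ i, ∑ j, ω i j * (sqDist (p i) (p j) - sqDist (q i) (q j))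
          = ∑ i, (∑ j, ω i j * sqDist (p i) (p j) - ∑ j, ω i j * sqDist (q i) (q j)) :=
            Finset.sum_congr rfl fun i _ => e1 i
        _ = ∑ i, ∑ j, ω i j * sqDist (p i) (p j)
            - ∑ i, ∑ j, ω i j * sqDist (q i) (q j) := Finset.sum_sub_distrib _ _
        _ = - ∑ k, 2 * ((fun i => q i k) ⬝ᵥ (stressMatrix ω *ᵥ (fun i => q i k))) := by
            rw [hEp, hEq2]; ring
    have htnn : 0 ≤ ∑ i, ∑ j, ω i j * (sqDist (p i) (p j) - sqDist (q i) (q j)) :=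
      Finset.sum_nonneg fun i _ => Finset.sum_nonneg fun j _ => ht i j
    have hEnn : 0 ≤ ∑ k, 2 * ((fun i => q i k) ⬝ᵥ (stressMatrix ω *ᵥ (fun i => q i k))) :=
      Finset.sum_nonneg hqnn
    have hEq0 : ∑ k, 2 * ((fun i => q i k) ⬝ᵥ (stressMatrix ω *ᵥ (fun i => q i k))) = 0 := by
      linarith
    have htz : ∑ i, ∑ j, ω i j * (sqDist (p i) (p j) - sqDist (q i) (q j)) = 0 := by
      rw [hsum, hEq0, neg_zero]
    have htall : ∀ i j, ω i j * (sqDist (p i) (p j) - sqDist (q i) (q j)) = 0 := by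
      intro i j
      have hinner := (Finset.sum_eq_zero_iff_of_nonneg
        (fun i (_ : i ∈ Finset.univ) => Finset.sum_nonneg fun j _ => ht i j)).mp htz i
        (Finset.mem_univ i)
      exact (Finset.sum_eq_zero_iff_of_nonneg (fun j (_ : j ∈ Finset.univ) => ht i j)).mp
        hinner j (Finset.mem_univ j)
    have hqker : ∀ k, stressMatrix ω *ᵥ (fun i => q i k) = 0 := by
      intro k
      have h := (Finset.sum_eq_zero_iff_of_nonneg hqnn).mp hEq0 k (Finset.mem_univ k)
      have h' : (fun i => q i k) ⬝ᵥ (stressMatrix ω *ᵥ (fun i => q i k)) = 0 := by linarith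
      exact (hpsd.dotProduct_mulVec_zero_iff (fun i => q i k)).mp (by simpa using h')
    have hEqEdge : ∀ i j, ω i j ≠ 0 → sqDist (q i) (q j) = sqDist (p i) (p j) := by
      intro i j h0
      rcases mul_eq_zero.mp (htall i j) with h | h
      · exact absurd h h0
      · have h2 := sub_eq_zero.mp h
        linarith [h2]
    -- kernel characterization
    have hrange : LinearMap.range (affMap p)
        ≤ LinearMap.ker (Matrix.mulVecLin (stressMatrix ω)) := by
      rintro v ⟨⟨c, c0⟩, rfl⟩
      rw [LinearMap.mem_ker, Matrix.mulVecLin_apply]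
      funext i
      rw [stressMatrix_row_eq ω hdiag]
      have h1 : ∑ j, ω i j * (affMap p (c, c0) j)
          = (∑ j, ω i j * (p j ⬝ᵥ c)) + (∑ j, ω i j) * c0 := by
        rw [Finset.sum_mul, ← Finset.sum_add_distrib]
        exact Finset.sum_congr rfl fun j _ => by rw [affMap_apply]; ring
      rw [h1, hmom i c, affMap_apply]
      simp only [Pi.zero_apply]
      ring
    have hker : LinearMap.range (affMap p)
        = LinearMap.ker (Matrix.mulVecLin (stressMatrix ω)) := by
      apply Submodule.eq_of_le_of_finrank_le hrange
      have h0 := LinearMap.finrank_range_add_finrank_ker (Matrix.mulVecLin (stressMatrix ω))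
      rw [Module.finrank_fintype_fun_eq_card, Fintype.card_fin] at h0
      have h1 : (stressMatrix ω).rank
          = Module.finrank ℝ (LinearMap.range (Matrix.mulVecLin (stressMatrix ω))) := rfl
      have h2 : Module.finrank ℝ (LinearMap.range (affMap p)) = r + 1 := by
        rw [LinearMap.finrank_range_of_inj (affMap_inj (by omega) p hdim),
          Module.finrank_prod, Module.finrank_fintype_fun_eq_card, Fintype.card_fin,
          Module.finrank_self]
      rw [h2]
      omega
    have hq_aff : ∀ k : Fin s, ∃ c : Fin r → ℝ, ∃ c0 : ℝ, ∀ i, q i k = p i ⬝ᵥ c + c0 := by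
      intro k
      have hmem : (fun i => q i k) ∈ LinearMap.range (affMap p) := by
        rw [hker, LinearMap.mem_ker, Matrix.mulVecLin_apply]
        exact hqker k
      obtain ⟨⟨c, c0⟩, hcc⟩ := hmem
      exact ⟨c, c0, fun i => (congrFun hcc i).symm⟩
    choose a b hab using hq_aff
    -- the quadratic form
    have hsq : ∀ i j, sqDist (q i) (q j) - sqDist (p i) (p j)
        = Fbil a (p i - p j) (p i - p j) := by
      intro i j
      have hdq : ∀ k, q i k - q j k = (p i - p j) ⬝ᵥ a k := by
        intro k
        rw [hab k i, hab k j, sub_dotProduct]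
        ring
      rw [Fbil, sqDist, sqDist]
      have h1 : ∑ k, (q i k - q j k)^2
          = ∑ k, ((p i - p j) ⬝ᵥ a k) * ((p i - p j) ⬝ᵥ a k) :=
        Finset.sum_congr rfl fun k _ => by rw [hdq k]; ring
      have h2 : ∑ k, (p i k - p j k)^2 = (p i - p j) ⬝ᵥ (p i - p j) := by
        rw [dotProduct]
        exact Finset.sum_congr rfl fun k _ => by simp only [Pi.sub_apply]; ring
      rw [h1, h2]
    have hFzero : ∀ i j, ((i, j) ∈ B ∨ ω i j ≠ 0) →
        Fbil a (p i - p j) (p i - p j) = 0 := by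
      intro i j h
      rw [← hsq i j]
      rcases h with hB | hω
      · rw [hdom.1 (i, j) hB]; ring
      · rw [hEqEdge i j hω]; ring
    have hFmom : ∀ i, ∑ j, ω i j * Fbil a (p i) (p j)
        = (∑ k', ω i k') * Fbil a (p i) (p i) := by
      intro i
      have hterm : ∀ j, ω i j * Fbil a (p i) (p j)
          = (∑ k, (p i ⬝ᵥ a k) * (ω i j * (p j ⬝ᵥ a k))) - ω i j * (p j ⬝ᵥ p i) := by
        intro j
        rw [Fbil, dotProduct_comm (p i) (p j), mul_sub, Finset.mul_sum]
        congr 1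
        exact Finset.sum_congr rfl fun k _ => by ring
      rw [Finset.sum_congr rfl fun j (_ : j ∈ Finset.univ) => hterm j,
        Finset.sum_sub_distrib]
      have h1 : ∑ j, ∑ k, (p i ⬝ᵥ a k) * (ω i j * (p j ⬝ᵥ a k))
          = ∑ k, (p i ⬝ᵥ a k) * ((∑ k', ω i k') * (p i ⬝ᵥ a k)) := by
        rw [Finset.sum_comm]
        refine Finset.sum_congr rfl fun k _ => ?_
        rw [← Finset.mul_sum, hmom i (a k)]
      rw [h1, hmom i (p i), Fbil, dotProduct_comm (p i) (p i), mul_sub, Finset.mul_sum]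
      congr 1
      exact Finset.sum_congr rfl fun k _ => by ring
    have hΩw : stressMatrix ω *ᵥ (fun i => Fbil a (p i) (p i)) = 0 := by
      funext i
      rw [stressMatrix_row_eq ω hdiag]
      show (∑ k, ω i k) * Fbil a (p i) (p i) - ∑ j, ω i j * Fbil a (p j) (p j)
          = (0 : Fin n → ℝ) i
      have hstep : ∀ j, ω i j * Fbil a (p j) (p j)
          = ω i j * (2 * Fbil a (p i) (p j) - Fbil a (p i) (p i)) := by
        intro j
        by_cases h : ω i j = 0
        · rw [h]; ring
        · have h0 := hFzero i j (Or.inr h)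
          rw [Fbil_expand] at h0
          have h3 : Fbil a (p j) (p j)
              = 2 * Fbil a (p i) (p j) - Fbil a (p i) (p i) := by linarith
          rw [h3]
      have h2 : ∑ j, ω i j * Fbil a (p j) (p j)
          = 2 * ((∑ k', ω i k') * Fbil a (p i) (p i))
            - (∑ j, ω i j) * Fbil a (p i) (p i) := by
        calc ∑ j, ω i j * Fbil a (p j) (p j)
            = ∑ j, (2 * (ω i j * Fbil a (p i) (p j)) - ω i j * Fbil a (p i) (p i)) :=
              Finset.sum_congr rfl fun j _ => by rw [hstep j]; ring
          _ = 2 * (∑ j, ω i j * Fbil a (p i) (p j)) - (∑ j, ω i j) * Fbil a (p i) (p i) := by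
              rw [Finset.sum_sub_distrib, ← Finset.mul_sum, ← Finset.sum_mul]
          _ = _ := by rw [hFmom i]
      rw [h2]
      simp only [Pi.zero_apply]
      ring
    have hwmem : (fun i => Fbil a (p i) (p i)) ∈ LinearMap.range (affMap p) := by
      rw [hker, LinearMap.mem_ker, Matrix.mulVecLin_apply]
      exact hΩw
    obtain ⟨⟨c, c0⟩, hc⟩ := hwmem
    have hw_aff : ∀ i, Fbil a (p i) (p i) = p i ⬝ᵥ c + c0 :=
      fun i => (congrFun hc i).symm
    -- per-vertex conclusion from the spanning condition
    have hgc : ∀ i, (2 : ℝ) • gvec a (p i) - c = 0 := by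
      intro i
      apply dot_eq_zero_of_span ((2 : ℝ) • gvec a (p i) - c) ((fun x => x -ᵥ p i) ''
        (insert (p i) (p '' {j | (i, j) ∈ B ∨
          ((i, j) ∈ C ∧ ω i j ≠ 0) ∨ ((i, j) ∈ S ∧ ω i j ≠ 0)})))
      · rw [← vectorSpan_eq_span_vsub_set_right ℝ (Set.mem_insert (p i) _),
          ← direction_affineSpan, hspan i]
        exact AffineSubspace.direction_top ℝ _ _
      · rintro v ⟨x, hx, rfl⟩
        rcases Set.mem_insert_iff.mp hx with rfl | ⟨j, hj, rfl⟩
        · simp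
        · have hFz : Fbil a (p i - p j) (p i - p j) = 0 := by
            apply hFzero i j
            rcases hj with hB | ⟨_, hω⟩ | ⟨_, hω⟩
            · exact Or.inl hB
            · exact Or.inr hω
            · exact Or.inr hω
          rw [Fbil_expand] at hFz
          have hwj := hw_aff j
          have hwi := hw_aff i
          show (p j -ᵥ p i) ⬝ᵥ ((2 : ℝ) • gvec a (p i) - c) = 0
          rw [vsub_eq_sub, dotProduct_sub, dotProduct_smul,
            dotProduct_comm (p j - p i) (gvec a (p i)), gvec_dot,
            Fbil_sub_right, sub_dotProduct]
          simp only [smul_eq_mul]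
          linarith
    -- conclusion
    intro i j
    have h1 : gvec a (p i) = gvec a (p j) := by
      funext l
      have f1 := congrFun (hgc i) l
      have f2 := congrFun (hgc j) l
      simp only [Pi.sub_apply, Pi.smul_apply, smul_eq_mul, Pi.zero_apply] at f1 f2
      linarith
    have h2 : Fbil a (p i - p j) (p i - p j) = 0 := by
      rw [← gvec_dot, gvec_sub, h1, sub_self, zero_dotProduct]
    have h3 := hsq i j
    rw [h2] at h3
    exact sub_eq_zero.mp h3
end
end

section
/- Let (G,p) be an r-dimensional bar framework on n vertices in ℝ^r with r ≤ n−2. Suppose (1) (G,p) has a positive semidefinite stress matrix Ω with rank n−r−1, and (2) for each vertex i, the set {p^i} ∪ {p^j : j ∈ N(i)} affinely spans ℝ^r, where N(i) = {j : {i,j} ∈ E} is the set of neighbors of i. Then (G,p) is universally rigid. -/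
open Matrix BigOperators

noncomputable section

/-- If a set affinely spans `ℝ^r` and `d` is orthogonal to all differences `x - a`
for `x` in the set (where `a` is in the set), then `d = 0`. -/
lemma dot_cancel {r : ℕ} {S : Set (Fin r → ℝ)}
    (hS : affineSpan ℝ S = ⊤) {a : Fin r → ℝ} (ha : a ∈ S)
    (d : Fin r → ℝ) (hd : ∀ x ∈ S, d ⬝ᵥ (x - a) = 0) : d = 0 := by
  have hvs : vectorSpan ℝ S = ⊤ := by
    rw [← direction_affineSpan, hS, AffineSubspace.direction_top]
  have hvs2 : Submodule.span ℝ ((· -ᵥ a) '' S) = ⊤ := by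
    rw [← vectorSpan_eq_span_vsub_set_right ℝ ha, hvs]
  let φ : (Fin r → ℝ) →ₗ[ℝ] ℝ :=
    { toFun := fun v => d ⬝ᵥ v
      map_add' := fun x y => dotProduct_add d x y
      map_smul' := fun c x => by simp [dotProduct_smul, smul_eq_mul] }
  have hker : Submodule.span ℝ ((· -ᵥ a) '' S) ≤ LinearMap.ker φ := by
    rw [Submodule.span_le]
    rintro v ⟨x, hx, rfl⟩
    simpa [φ, vsub_eq_sub] using hd x hx
  have hall : ∀ v, d ⬝ᵥ v = 0 := by
    intro v
    have hv : v ∈ LinearMap.ker φ := hker (by rw [hvs2]; exact Submodule.mem_top)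
    simpa [φ] using hv
  funext k
  simpa [dotProduct_single] using hall (Pi.single k 1)

/-- Sum of dot products against a family equals dot product against the sum. -/
lemma dot_sum {n r : ℕ} (a : Fin r → ℝ) (g : Fin n → Fin r → ℝ) :
    ∑ j, a ⬝ᵥ g j = a ⬝ᵥ (∑ j, g j) := by
  simp only [dotProduct, Finset.sum_apply, Finset.mul_sum]
  rw [Finset.sum_comm]

/-- bar framework with PSD stress matrix of rank `n-r-1` such that each
point together with its neighbors affinely spans `ℝ^r` is universally rigid. -/
theorem statement4 {n r : ℕ} (hr : r ≤ n - 2)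
    (E : Set (Fin n × Fin n)) (hG : TensegrityGraph E ∅ ∅)
    (p : Fin n → Fin r → ℝ)
    (hdim : affineSpan ℝ (Set.range p) = ⊤)
    (ω : Fin n → Fin n → ℝ)
    (hstress : IsStress E p ω)
    (hpsd : (stressMatrix ω).PosSemidef)
    (hrank : (stressMatrix ω).rank = n - r - 1)
    (hspan : ∀ i : Fin n,
      affineSpan ℝ (insert (p i) (p '' {j | (i, j) ∈ E})) = ⊤) :
    UniversallyRigid E ∅ ∅ p := by
  classical
  rcases Nat.eq_zero_or_pos n with hn0 | hn
  · subst hn0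
    intro s q _ i j
    exact i.elim0
  have hrn : r + 1 ≤ n := by omega
  intro s q hdom
  obtain ⟨hωsym, hωE, hωeq⟩ := hstress
  set Ω := stressMatrix ω with hΩdef
  -- no loops, hence ω i i = 0
  have hii : ∀ i, ω i i = 0 := by
    intro i
    apply hωE
    intro hE
    exact hG.2.2.2.1 i (by simp [Set.mem_union, hE])
  -- formula for Ω *ᵥ v
  have hmv : ∀ (v : Fin n → ℝ) (i : Fin n), (Ω *ᵥ v) i = ∑ j, ω i j * (v i - v j) := by
    intro v i
    have hterm : ∀ j : Fin n, Ω i j * v j =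
        (if i = j then ((∑ k, ω i k) + ω i j) * v j else 0) - ω i j * v j := by
      intro j
      by_cases h : i = j
      · subst h; simp [hΩdef, stressMatrix]; ring
      · simp [hΩdef, stressMatrix, h]
    calc (Ω *ᵥ v) i = ∑ j, Ω i j * v j := by simp [Matrix.mulVec, dotProduct]
      _ = ∑ j, ((if i = j then ((∑ k, ω i k) + ω i j) * v j else 0) - ω i j * v j) :=
          Finset.sum_congr rfl fun j _ => hterm j
      _ = (∑ j, (if i = j then ((∑ k, ω i k) + ω i j) * v j else 0)) - ∑ j, ω i j * v j := by
          rw [Finset.sum_sub_distrib]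
      _ = ((∑ k, ω i k) + ω i i) * v i - ∑ j, ω i j * v j := by
          rw [Finset.sum_ite_eq]; simp
      _ = ∑ j, ω i j * (v i - v j) := by
          rw [hii i, add_zero, Finset.sum_mul]
          rw [← Finset.sum_sub_distrib]
          exact Finset.sum_congr rfl fun j _ => by ring
  -- the columns of p and the all-ones vector are in the kernel of Ω
  have hΩp : ∀ k : Fin r, Ω *ᵥ (fun i => p i k) = 0 := by
    intro k
    funext i
    rw [hmv]
    have h0 := congrFun (hωeq i) k
    simpa [Finset.sum_apply, smul_eq_mul] using h0
  have hΩ1 : Ω *ᵥ (fun _ => (1 : ℝ)) = 0 := by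
    funext i
    rw [hmv]
    simp
  -- quadratic form identity
  have hquad : ∀ v : Fin n → ℝ,
      2 * (v ⬝ᵥ (Ω *ᵥ v)) = ∑ i, ∑ j, ω i j * (v i - v j) ^ 2 := by
    intro v
    have h1 : v ⬝ᵥ (Ω *ᵥ v) = ∑ i, ∑ j, ω i j * v i * (v i - v j) := by
      simp only [dotProduct]
      refine Finset.sum_congr rfl fun i _ => ?_
      rw [hmv, Finset.mul_sum]
      exact Finset.sum_congr rfl fun j _ => by ring
    have h2 : ∑ i, ∑ j, ω i j * v j * (v i - v j)
        = ∑ i, ∑ j, -(ω i j * v i * (v i - v j)) := by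
      rw [Finset.sum_comm]
      refine Finset.sum_congr rfl fun i _ => Finset.sum_congr rfl fun j _ => ?_
      rw [hωsym j i]
      ring
    have h3 : ∑ i, ∑ j, ω i j * (v i - v j) ^ 2
        = ∑ i, ∑ j, (ω i j * v i * (v i - v j) - ω i j * v j * (v i - v j)) :=
      Finset.sum_congr rfl fun i _ => Finset.sum_congr rfl fun j _ => by ring
    rw [h1, h3]
    simp only [Finset.sum_sub_distrib]
    rw [h2]
    simp only [Finset.sum_neg_distrib]
    ring
  -- energy of a configuration
  have henergy : ∀ (m : ℕ) (x : Fin n → Fin m → ℝ),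
      ∑ i, ∑ j, ω i j * sqDist (x i) (x j)
        = ∑ k, 2 * ((fun i => x i k) ⬝ᵥ (Ω *ᵥ fun i => x i k)) := by
    intro m x
    have : ∑ i, ∑ j, ω i j * sqDist (x i) (x j)
        = ∑ k : Fin m, ∑ i, ∑ j, ω i j * (x i k - x j k) ^ 2 := by
      simp only [sqDist, Finset.mul_sum]
      rw [Finset.sum_congr rfl fun i (_ : i ∈ Finset.univ) => Finset.sum_comm]
      rw [Finset.sum_comm]
    rw [this]
    exact Finset.sum_congr rfl fun k _ => (hquad _).symm
  -- energy of p is zero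
  have hEp : ∑ i, ∑ j, ω i j * sqDist (p i) (p j) = 0 := by
    rw [henergy r p]
    refine Finset.sum_eq_zero fun k _ => ?_
    rw [hΩp k]
    simp
  -- energies agree on the support of ω
  have hEq : ∑ i, ∑ j, ω i j * sqDist (q i) (q j)
      = ∑ i, ∑ j, ω i j * sqDist (p i) (p j) := by
    refine Finset.sum_congr rfl fun i _ => Finset.sum_congr rfl fun j _ => ?_
    by_cases hz : ω i j = 0
    · simp [hz]
    · have hE : (i, j) ∈ E := by
        by_contra hE
        exact hz (hωE i j hE)
      rw [hdom.1 (i, j) hE]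
  -- each column of q is in the kernel of Ω
  have hΩq : ∀ k : Fin s, Ω *ᵥ (fun i => q i k) = 0 := by
    have hsum : ∑ k : Fin s, 2 * ((fun i => q i k) ⬝ᵥ (Ω *ᵥ fun i => q i k)) = 0 := by
      rw [← henergy s q, hEq, hEp]
    have hnn : ∀ k : Fin s, 0 ≤ 2 * ((fun i => q i k) ⬝ᵥ (Ω *ᵥ fun i => q i k)) := by
      intro k
      have := hpsd.dotProduct_mulVec_nonneg (fun i => q i k)
      simp only [star_trivial] at this
      positivity
    intro k
    have hzero : 2 * ((fun i => q i k) ⬝ᵥ (Ω *ᵥ fun i => q i k)) = 0 :=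
      (Finset.sum_eq_zero_iff_of_nonneg fun k _ => hnn k).1 hsum k (Finset.mem_univ k)
    have hz2 : (fun i => q i k) ⬝ᵥ (Ω *ᵥ fun i => q i k) = 0 := by linarith
    have := (hpsd.dotProduct_mulVec_zero_iff (fun i => q i k)).1 (by simpa using hz2)
    exact this
  -- the kernel of Ω is spanned by the columns of p and the all-ones vector
  set f : Fin (r + 1) → (Fin n → ℝ) :=
    Fin.snoc (fun k i => p i k) (fun _ => 1) with hfdef
  have hfker : ∀ k, f k ∈ LinearMap.ker Ω.mulVecLin := by
    intro k
    refine Fin.lastCases ?_ (fun k' => ?_) k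
    · simp only [hfdef, Fin.snoc_last, LinearMap.mem_ker, Matrix.mulVecLin_apply]
      exact hΩ1
    · simp only [hfdef, Fin.snoc_castSucc, LinearMap.mem_ker, Matrix.mulVecLin_apply]
      exact hΩp k'
  obtain ⟨i0⟩ : Nonempty (Fin n) := ⟨⟨0, hn⟩⟩
  have hfind : LinearIndependent ℝ f := by
    rw [Fintype.linearIndependent_iff]
    intro g hg
    have hgi : ∀ i, (∑ k' : Fin r, g (Fin.castSucc k') * p i k') + g (Fin.last r) = 0 := by
      intro i
      have h0 := congrFun hg i
      simpa [hfdef, Fin.sum_univ_castSucc, Fin.snoc_castSucc, Fin.snoc_last,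
        Finset.sum_apply, smul_eq_mul] using h0
    have hg0 : (fun k' => g (Fin.castSucc k')) = 0 := by
      refine dot_cancel hdim (Set.mem_range_self i0) _ ?_
      rintro x ⟨i, rfl⟩
      have h1 := hgi i
      have h2 := hgi i0
      have : (fun k' => g (Fin.castSucc k')) ⬝ᵥ (p i - p i0)
          = (∑ k' : Fin r, g (Fin.castSucc k') * p i k')
            - ∑ k' : Fin r, g (Fin.castSucc k') * p i0 k' := by
        simp [dotProduct, mul_sub, Finset.sum_sub_distrib]
      rw [this]
      linarith
    intro k
    refine Fin.lastCases ?_ (fun k' => ?_) k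
    · have h2 := hgi i0
      have : ∑ k' : Fin r, g (Fin.castSucc k') * p i0 k' = 0 := by
        refine Finset.sum_eq_zero fun k' _ => ?_
        rw [congrFun hg0 k']
        simp
      linarith
    · exact congrFun hg0 k'
  have hfspan : Submodule.span ℝ (Set.range f) = LinearMap.ker Ω.mulVecLin := by
    apply Submodule.eq_of_le_of_finrank_eq
    · rw [Submodule.span_le]
      rintro v ⟨k, rfl⟩
      exact hfker k
    · have hrange := LinearMap.finrank_range_add_finrank_ker Ω.mulVecLin
      rw [Module.finrank_pi ℝ, Fintype.card_fin] at hrange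
      have hrankΩ : Module.finrank ℝ (LinearMap.range Ω.mulVecLin) = n - r - 1 := hrank
      rw [finrank_span_eq_card hfind, Fintype.card_fin]
      omega
  -- q is an affine image of p
  have hqmem : ∀ k : Fin s, ∃ c : Fin (r + 1) → ℝ, ∑ k', c k' • f k' = fun i => q i k := by
    intro k
    have : (fun i => q i k) ∈ LinearMap.ker Ω.mulVecLin := by
      rw [LinearMap.mem_ker, Matrix.mulVecLin_apply]
      exact hΩq k
    rw [← hfspan] at this
    exact (Submodule.mem_span_range_iff_exists_fun ℝ).1 this
  choose c hc using hqmem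
  set T : Matrix (Fin s) (Fin r) ℝ := Matrix.of fun k k' => c k (Fin.castSucc k') with hTdef
  set b : Fin s → ℝ := fun k => c k (Fin.last r) with hbdef
  have hq : ∀ i k, q i k = (T *ᵥ p i) k + b k := by
    intro i k
    have h0 := congrFun (hc k) i
    simp only [hfdef, Fin.sum_univ_castSucc, Fin.snoc_castSucc, Fin.snoc_last,
      Finset.sum_apply, Pi.smul_apply, smul_eq_mul, mul_one] at h0
    rw [← h0]
    simp [hTdef, hbdef, Matrix.mulVec, dotProduct]
  -- the bilinear form measuring distortion
  set w : (Fin r → ℝ) → (Fin r → ℝ) := fun u => Tᵀ *ᵥ (T *ᵥ u) - u with hwdef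
  have hTdot : ∀ x : Fin s → ℝ, ∀ v : Fin r → ℝ, (Tᵀ *ᵥ x) ⬝ᵥ v = x ⬝ᵥ (T *ᵥ v) := by
    intro x v
    rw [Matrix.mulVec_transpose]
    exact (Matrix.dotProduct_mulVec x T v).symm
  have hwdot : ∀ u v, w u ⬝ᵥ v = (T *ᵥ u) ⬝ᵥ (T *ᵥ v) - u ⬝ᵥ v := by
    intro u v
    simp only [hwdef, sub_dotProduct]
    rw [hTdot]
  have hwsym : ∀ u v, w u ⬝ᵥ v = w v ⬝ᵥ u := by
    intro u v
    rw [hwdot, hwdot, dotProduct_comm, dotProduct_comm u v]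
  have hwsub : ∀ u v, w (u - v) = w u - w v := by
    intro u v
    simp only [hwdef, Matrix.mulVec_sub]
    abel
  -- distance distortion formula
  have hsq : ∀ i j, sqDist (q i) (q j)
      = sqDist (p i) (p j) + w (p i - p j) ⬝ᵥ (p i - p j) := by
    intro i j
    have hqd : (fun k => q i k) - (fun k => q j k) = T *ᵥ (p i - p j) := by
      funext k
      simp only [Pi.sub_apply, hq i k, hq j k, Matrix.mulVec_sub]
      ring
    have : sqDist (q i) (q j) = (T *ᵥ (p i - p j)) ⬝ᵥ (T *ᵥ (p i - p j)) := by
      rw [sqDist_eq_dot]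
      exact congrArg₂ _ hqd hqd
    rw [this, sqDist_eq_dot, hwdot]
    ring
  -- the squared-norm vector h is in the kernel of Ω
  set h : Fin n → ℝ := fun i => w (p i) ⬝ᵥ p i with hhdef
  have hpolar : ∀ i j, w (p i - p j) ⬝ᵥ (p i - p j)
      = h i - 2 * (w (p i) ⬝ᵥ p j) + h j := by
    intro i j
    rw [hwsub]
    simp only [sub_dotProduct, dotProduct_sub]
    rw [hwsym (p j) (p i)]
    simp only [hhdef]
    ring
  have hedge : ∀ i j, (i, j) ∈ E → w (p i - p j) ⬝ᵥ (p i - p j) = 0 := by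
    intro i j hE
    have := hdom.1 (i, j) hE
    have h2 := hsq i j
    simp only at this h2
    linarith
  have hΩh : Ω *ᵥ h = 0 := by
    funext i
    rw [hmv]
    have key : ∀ j, ω i j * (h i - h j) = 2 * (w (p i) ⬝ᵥ (ω i j • (p i - p j))) := by
      intro j
      by_cases hz : ω i j = 0
      · simp [hz]
      · have hE : (i, j) ∈ E := by
          by_contra hE
          exact hz (hωE i j hE)
        have he := hedge i j hE
        have hp := hpolar i j
        have hu1 : h i = w (p i) ⬝ᵥ p i := rfl
        have hu2 : h j = w (p j) ⬝ᵥ p j := rfl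
        rw [dotProduct_smul, smul_eq_mul, dotProduct_sub, hu1, hu2]
        linear_combination (-(ω i j)) * he + (ω i j) * hp
    calc ∑ j, ω i j * (h i - h j)
        = ∑ j, 2 * (w (p i) ⬝ᵥ (ω i j • (p i - p j))) :=
          Finset.sum_congr rfl fun j _ => key j
      _ = 2 * ∑ j, w (p i) ⬝ᵥ (ω i j • (p i - p j)) := by rw [Finset.mul_sum]
      _ = 2 * (w (p i) ⬝ᵥ (∑ j, ω i j • (p i - p j))) := by rw [dot_sum]
      _ = 0 := by rw [hωeq i]; simp
  -- hence h is an affine function of p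
  obtain ⟨ch, hch⟩ : ∃ ch : Fin (r + 1) → ℝ, ∑ k', ch k' • f k' = h := by
    have : h ∈ LinearMap.ker Ω.mulVecLin := by
      rw [LinearMap.mem_ker, Matrix.mulVecLin_apply]
      exact hΩh
    rw [← hfspan] at this
    exact (Submodule.mem_span_range_iff_exists_fun ℝ).1 this
  set cvec : Fin r → ℝ := fun k' => ch (Fin.castSucc k') with hcvecdef
  have hh : ∀ i, h i = cvec ⬝ᵥ p i + ch (Fin.last r) := by
    intro i
    have h0 := congrFun hch i
    simp only [hfdef, Fin.sum_univ_castSucc, Fin.snoc_castSucc, Fin.snoc_last,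
      Finset.sum_apply, Pi.smul_apply, smul_eq_mul, mul_one] at h0
    rw [← h0]
    simp [hcvecdef, dotProduct]
  -- the neighborhood condition forces w to vanish on all p i - p j
  have hvert : ∀ i, (2 : ℝ) • w (p i) - cvec = 0 := by
    intro i
    refine dot_cancel (hspan i) (Set.mem_insert _ _) _ ?_
    intro x hx
    rcases Set.mem_insert_iff.1 hx with rfl | ⟨j, hj, rfl⟩
    · simp
    · have hE : (i, j) ∈ E := hj
      have he := hedge i j hE
      have hp := hpolar i j
      have e1 : 2 * (w (p i) ⬝ᵥ p j) = h i + h j := by linarith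
      have e2 := hh i
      have e3 := hh j
      have expand : ((2 : ℝ) • w (p i) - cvec) ⬝ᵥ (p j - p i)
          = 2 * (w (p i) ⬝ᵥ p j) - 2 * (w (p i) ⬝ᵥ p i)
            - (cvec ⬝ᵥ p j) + (cvec ⬝ᵥ p i) := by
        simp only [sub_dotProduct, dotProduct_sub, smul_dotProduct,
          smul_eq_mul]
        ring
      rw [expand]
      simp only [hhdef] at e1 e2 e3
      linarith
  have hwp : ∀ i j, w (p i - p j) = 0 := by
    intro i j
    rw [hwsub]
    have h1 := hvert i
    have h2 := hvert j
    have : (2 : ℝ) • w (p i) = (2 : ℝ) • w (p j) := by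
      have := sub_eq_zero.1 h1
      rw [this, ← sub_eq_zero.1 h2]
    have hww : w (p i) = w (p j) := by
      have h2ne : (2 : ℝ) ≠ 0 := two_ne_zero
      funext k
      have := congrFun this k
      simp only [Pi.smul_apply, smul_eq_mul] at this
      linarith
    rw [hww, sub_self]
  -- conclude congruence
  intro i j
  rw [hsq i j, hwp i j]
  simp
end
end

section
/- Let (K, K̄) be a partition of the set of all unordered pairs {{i,j} : 1 ≤ i < j ≤ n}, and let 𝓛 = span{F^{ij} : {i,j} ∈ K} inside the space 𝒮_n of n×n real symmetric matrices with inner product ⟨A,B⟩ = trace(AB). Then the set {E^{ij} : {i,j} ∈ K̄} ∪ {L^i : i = 1,…,n} is a basis of 𝓛^⊥, the orthogonal complement of 𝓛 in 𝒮_n. -/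
open Matrix BigOperators

noncomputable section

section Helpers
variable {n : ℕ}

lemma Emat_apply (i j a b : Fin n) :
    Emat i j a b = (if a = i ∧ b = j then (1:ℝ) else 0) + (if a = j ∧ b = i then 1 else 0) := by
  simp only [Emat, Matrix.add_apply, Matrix.vecMulVec_apply, Pi.single_apply]
  split_ifs <;> simp_all

lemma Lmat_apply (i a b : Fin n) :
    Lmat i a b = (if a = i then (1:ℝ) else 0) + (if b = i then 1 else 0) := by
  simp [Lmat, Matrix.vecMulVec_apply, Pi.single_apply]

lemma trace_Fmat_mul (i j : Fin n) (A : Matrix (Fin n) (Fin n) ℝ) :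
    (Fmat i j * A).trace = A i i + A j j - A i j - A j i := by
  simp [Fmat, Matrix.trace, Matrix.diag, Matrix.mul_apply, Matrix.vecMulVec_apply,
    Pi.sub_apply, Pi.single_apply, sub_mul, mul_sub, Finset.sum_sub_distrib,
    ite_mul, mul_ite, Finset.sum_ite_eq, Finset.sum_ite_eq']
  ring

lemma Emat_apply_lt {i j a b : Fin n} (hij : i < j) (hab : a < b) :
    Emat i j a b = if (i, j) = (a, b) then (1:ℝ) else 0 := by
  have h2 : ¬(a = j ∧ b = i) := by rintro ⟨rfl, rfl⟩; exact absurd hab (asymm hij)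
  rw [Emat_apply, if_neg h2, add_zero]
  by_cases h : a = i ∧ b = j
  · obtain ⟨rfl, rfl⟩ := h; simp
  · rw [if_neg h, if_neg (fun hp => by injection hp with h1 h2; exact h ⟨h1.symm, h2.symm⟩)]

lemma sum_Lmat_apply (d : Fin n → ℝ) (a b : Fin n) :
    (∑ i, d i • Lmat i) a b = d a + d b := by
  simp [Matrix.sum_apply, Lmat_apply, mul_add, Finset.sum_add_distrib, mul_ite,
    Finset.sum_ite_eq]

open scoped Classical in
lemma sum_Emat_apply (Kbar : Set (Fin n × Fin n)) [Fintype {e : Fin n × Fin n // e ∈ Kbar}]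
    (hKb : ∀ e ∈ Kbar, e.1 < e.2) (c : {e : Fin n × Fin n // e ∈ Kbar} → ℝ)
    {a b : Fin n} (hab : a < b) :
    (∑ e : {e : Fin n × Fin n // e ∈ Kbar}, c e • Emat e.1.1 e.1.2) a b
      = if h : (a, b) ∈ Kbar then c ⟨(a, b), h⟩ else 0 := by
  rw [Matrix.sum_apply]
  by_cases h : (a, b) ∈ Kbar
  · rw [dif_pos h, Finset.sum_eq_single (⟨(a, b), h⟩ : {e : Fin n × Fin n // e ∈ Kbar})]
    · simp [Emat_apply_lt (hKb _ h) hab]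
    · intro e _ hne
      have hne' : ((e : Fin n × Fin n).1, (e : Fin n × Fin n).2) ≠ (a, b) := by
        rw [Prod.mk.eta]; exact fun hh => hne (Subtype.ext hh)
      simp [Emat_apply_lt (hKb _ e.2) hab, hne']
    · intro h'; exact absurd (Finset.mem_univ _) h'
  · rw [dif_neg h]
    refine Finset.sum_eq_zero fun e _ => ?_
    have hne' : ((e : Fin n × Fin n).1, (e : Fin n × Fin n).2) ≠ (a, b) := by
      rw [Prod.mk.eta]; exact fun hh => h (hh ▸ e.2)
    simp [Emat_apply_lt (hKb _ e.2) hab, hne']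

lemma sum_Emat_diag (Kbar : Set (Fin n × Fin n)) [Fintype {e : Fin n × Fin n // e ∈ Kbar}]
    (hKb : ∀ e ∈ Kbar, e.1 < e.2) (c : {e : Fin n × Fin n // e ∈ Kbar} → ℝ) (a : Fin n) :
    (∑ e : {e : Fin n × Fin n // e ∈ Kbar}, c e • Emat e.1.1 e.1.2) a a = 0 := by
  rw [Matrix.sum_apply]
  refine Finset.sum_eq_zero fun e _ => ?_
  have hne := (hKb _ e.2).ne
  have h1 : ¬(a = (e : Fin n × Fin n).1 ∧ a = (e : Fin n × Fin n).2) := by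
    rintro ⟨rfl, h'⟩; exact hne h'
  have h2 : ¬(a = (e : Fin n × Fin n).2 ∧ a = (e : Fin n × Fin n).1) := by
    rintro ⟨rfl, h'⟩; exact hne h'.symm
  simp [Emat_apply, h1, h2]

lemma Emat_symm (i j : Fin n) : (Emat i j).IsSymm := by
  ext a b; simp [Matrix.transpose_apply, Emat, Matrix.vecMulVec_apply]; ring

lemma Lmat_symm (i : Fin n) : (Lmat i).IsSymm := by
  ext a b; simp [Matrix.transpose_apply, Lmat, Matrix.vecMulVec_apply]; ring

lemma Emat_comm (i j a b : Fin n) : Emat i j a b = Emat i j b a := by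
  simp [Emat, Matrix.vecMulVec_apply]; ring

lemma trace_F_Lmat (i j k : Fin n) : (Fmat i j * Lmat k).trace = 0 := by
  rw [trace_Fmat_mul, Lmat_apply, Lmat_apply, Lmat_apply, Lmat_apply]; ring

lemma trace_F_Emat {i j a b : Fin n} (hij : i < j) (hab : a < b)
    (hne : (a, b) ≠ (i, j)) : (Fmat i j * Emat a b).trace = 0 := by
  rw [trace_Fmat_mul]
  have h1 : ¬(i = a ∧ i = b) := by rintro ⟨rfl, rfl⟩; exact absurd hab (lt_irrefl _)
  have h2 : ¬(j = a ∧ j = b) := by rintro ⟨rfl, rfl⟩; exact absurd hab (lt_irrefl _)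
  rw [Emat_comm a b j i, Emat_apply_lt hab hij, if_neg hne]
  rw [Emat_apply, Emat_apply, if_neg h1, if_neg h2]
  have h3 : ¬(i = b ∧ i = a) := fun h => h1 ⟨h.2, h.1⟩
  have h4 : ¬(j = b ∧ j = a) := fun h => h2 ⟨h.2, h.1⟩
  rw [if_neg h3, if_neg h4]; ring

end Helpers

/-- for a partition `(K, K̄)` of the pairs `i < j`, the family
`{E^{ij} : {i,j} ∈ K̄} ∪ {L^i : i = 1,…,n}` is a basis of the orthogonal complement
(w.r.t. `⟨A,B⟩ = trace (AB)`) of `span {F^{ij} : {i,j} ∈ K}` in the space of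
symmetric `n × n` matrices. -/
theorem statement6 {n : ℕ} (K Kbar : Set (Fin n × Fin n))
    (hpart : K ∪ Kbar = {e : Fin n × Fin n | e.1 < e.2})
    (hdisj : K ∩ Kbar = ∅) :
    LinearIndependent ℝ
      (Sum.elim (fun e : {e : Fin n × Fin n // e ∈ Kbar} => Emat e.1.1 e.1.2)
        (fun i : Fin n => Lmat i)) ∧
    ∀ A : Matrix (Fin n) (Fin n) ℝ,
      A ∈ Submodule.span ℝ (Set.range
        (Sum.elim (fun e : {e : Fin n × Fin n // e ∈ Kbar} => Emat e.1.1 e.1.2)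
          (fun i : Fin n => Lmat i))) ↔
      A.IsSymm ∧ ∀ e ∈ K, (Fmat e.1 e.2 * A).trace = 0 := by
  classical
  haveI : Fintype {e : Fin n × Fin n // e ∈ Kbar} := Fintype.ofFinite _
  have hK : ∀ e ∈ K, e.1 < e.2 := fun e he => by
    have h : e ∈ K ∪ Kbar := Or.inl he
    rw [hpart] at h; exact h
  have hKb : ∀ e ∈ Kbar, e.1 < e.2 := fun e he => by
    have h : e ∈ K ∪ Kbar := Or.inr he
    rw [hpart] at h; exact h
  constructor
  · rw [Fintype.linearIndependent_iff]
    intro g hg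
    rw [Fintype.sum_sum_type] at hg
    simp only [Sum.elim_inl, Sum.elim_inr] at hg
    have hentry : ∀ a b : Fin n,
        ((∑ e : {e : Fin n × Fin n // e ∈ Kbar}, g (Sum.inl e) • Emat e.1.1 e.1.2) +
          ∑ i, g (Sum.inr i) • Lmat i) a b = 0 := fun a b => by rw [hg]; rfl
    have hd : ∀ i, g (Sum.inr i) = 0 := by
      intro i
      have h := hentry i i
      rw [Matrix.add_apply, sum_Emat_diag Kbar hKb, sum_Lmat_apply, zero_add] at h
      linarith
    rintro (e | i)
    · have hab := hKb _ e.2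
      have h := hentry (e : Fin n × Fin n).1 (e : Fin n × Fin n).2
      rw [Matrix.add_apply, sum_Emat_apply Kbar hKb _ hab, sum_Lmat_apply, hd, hd,
        add_zero, add_zero] at h
      have hm : ((e : Fin n × Fin n).1, (e : Fin n × Fin n).2) ∈ Kbar := by
        rw [Prod.mk.eta]; exact e.2
      rw [dif_pos hm] at h
      have heq : (⟨((e : Fin n × Fin n).1, (e : Fin n × Fin n).2), hm⟩ :
          {e : Fin n × Fin n // e ∈ Kbar}) = e := Subtype.ext (Prod.mk.eta)
      rwa [heq] at h
    · exact hd i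
  · intro A
    constructor
    · intro hA
      induction hA using Submodule.span_induction with
      | mem x hx =>
        obtain ⟨i, rfl⟩ := hx
        cases i with
        | inl e =>
          refine ⟨Emat_symm _ _, fun f hf => ?_⟩
          have hne : ((e : Fin n × Fin n).1, (e : Fin n × Fin n).2) ≠ (f.1, f.2) := by
            rw [Prod.mk.eta, Prod.mk.eta]
            intro hh
            exact Set.eq_empty_iff_forall_notMem.mp hdisj _ ⟨hh ▸ hf, e.2⟩
          exact trace_F_Emat (hK _ hf) (hKb _ e.2) hne
        | inr i => exact ⟨Lmat_symm _, fun f _ => trace_F_Lmat _ _ _⟩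
      | zero => exact ⟨Matrix.isSymm_zero, fun f _ => by simp⟩
      | add x y hx hy ihx ihy =>
        exact ⟨ihx.1.add ihy.1, fun f hf => by
          rw [Matrix.mul_add, Matrix.trace_add, ihx.2 f hf, ihy.2 f hf, add_zero]⟩
      | smul a x hx ihx =>
        exact ⟨ihx.1.smul a, fun f hf => by
          rw [Matrix.mul_smul, Matrix.trace_smul, ihx.2 f hf, smul_zero]⟩
    · rintro ⟨hsymm, htr⟩
      set d : Fin n → ℝ := fun i => A i i / 2 with hd
      set c : {e : Fin n × Fin n // e ∈ Kbar} → ℝ :=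
        fun e => A e.1.1 e.1.2 - d e.1.1 - d e.1.2 with hc
      have key : ∀ a b : Fin n, a < b →
          (if h : (a, b) ∈ Kbar then c ⟨(a, b), h⟩ else 0) + (d a + d b) = A a b := by
        intro a b hab
        by_cases h : (a, b) ∈ Kbar
        · rw [dif_pos h]; simp only [hc, hd]; ring
        · rw [dif_neg h, zero_add]
          have hmem : (a, b) ∈ K := by
            have hm : (a, b) ∈ K ∪ Kbar := by rw [hpart]; exact hab
            exact hm.resolve_right h
          have ht := htr _ hmem
          rw [trace_Fmat_mul] at ht
          have hs : A b a = A a b := hsymm.apply a b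
          simp only [hd]
          linarith
      have hdec : A = (∑ e : {e : Fin n × Fin n // e ∈ Kbar}, c e • Emat e.1.1 e.1.2) +
          ∑ i, d i • Lmat i := by
        ext a b
        rw [Matrix.add_apply, sum_Lmat_apply]
        rcases lt_trichotomy a b with hab | rfl | hba
        · rw [sum_Emat_apply Kbar hKb c hab, key a b hab]
        · rw [sum_Emat_diag Kbar hKb, zero_add]; simp only [hd]; ring
        · have hcomm : (∑ e : {e : Fin n × Fin n // e ∈ Kbar}, c e • Emat e.1.1 e.1.2) a b
              = (∑ e : {e : Fin n × Fin n // e ∈ Kbar}, c e • Emat e.1.1 e.1.2) b a := by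
            rw [Matrix.sum_apply, Matrix.sum_apply]
            exact Finset.sum_congr rfl fun e _ => by
              rw [Matrix.smul_apply, Matrix.smul_apply, Emat_comm]
          rw [hcomm, sum_Emat_apply Kbar hKb c hba, add_comm (d a) (d b), key b a hba,
            hsymm.apply a b]
      rw [hdec]
      exact Submodule.add_mem _
        (Submodule.sum_mem _ fun e _ => Submodule.smul_mem _ _
          (Submodule.subset_span ⟨Sum.inl e, rfl⟩))
        (Submodule.sum_mem _ fun i _ => Submodule.smul_mem _ _
          (Submodule.subset_span ⟨Sum.inr i, rfl⟩))
end
end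

section
/- Let (G,p) be a tensegrity framework and let Ω be a proper positive semidefinite stress matrix of (G,p). Then Ω is a proper stress matrix for every tensegrity framework (G,p') dominated by (G,p); in particular, if P' is the configuration matrix of (G,p') with centroid at the origin, then Ω P' = 0. -/
open Matrix BigOperators

noncomputable section

section Aux
variable {n : ℕ} (ω : Fin n → Fin n → ℝ)

lemma aux_mulVec (hω0 : ∀ i, ω i i = 0) (x : Fin n → ℝ) (i : Fin n) :
    (stressMatrix ω *ᵥ x) i = ∑ j, ω i j * (x i - x j) := by
  simp only [Matrix.mulVec, dotProduct, stressMatrix, Matrix.of_apply]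
  have h : ∀ j : Fin n, (if i = j then ∑ k, ω i k else -ω i j) * x j
      = (if i = j then (∑ k, ω i k) * x j else 0) - ω i j * x j := by
    intro j; by_cases h : i = j
    · subst h; simp [hω0]
    · simp [h]
  simp only [h, Finset.sum_sub_distrib, Finset.sum_ite_eq, Finset.mem_univ, if_true]
  simp only [mul_sub, Finset.sum_sub_distrib, Finset.sum_mul]

lemma aux_energy (hsym : ∀ i j, ω i j = ω j i) (hω0 : ∀ i, ω i i = 0)
    (x : Fin n → ℝ) :
    ∑ i, ∑ j, ω i j * (x i - x j) ^ 2 = 2 * ∑ i, x i * (stressMatrix ω *ᵥ x) i := by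
  have step1 : ∑ i, ∑ j, ω i j * (x i - x j) ^ 2
      = ∑ i, ∑ j, (ω i j * (x i - x j) * x i + ω j i * (x j - x i) * x j) := by
    refine Finset.sum_congr rfl fun i _ => Finset.sum_congr rfl fun j _ => ?_
    rw [← hsym i j]; ring
  rw [step1]
  simp only [Finset.sum_add_distrib]
  rw [Finset.sum_comm (f := fun i j => ω j i * (x j - x i) * x j)]
  have : ∀ i, x i * (stressMatrix ω *ᵥ x) i = ∑ j, ω i j * (x i - x j) * x i := by
    intro i
    rw [aux_mulVec ω hω0, Finset.mul_sum]
    exact Finset.sum_congr rfl fun j _ => by ring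
  simp only [this]
  rw [← two_mul, Finset.mul_sum]

end Aux

/-- a proper PSD stress matrix of `(G,p)` is a proper stress matrix of
every framework `(G,p')` dominated by `(G,p)`; in particular `Ω P' = 0`. -/
theorem statement11 {n r : ℕ}
    (B C S : Set (Fin n × Fin n)) (hG : TensegrityGraph B C S)
    (p : Fin n → Fin r → ℝ)
    (ω : Fin n → Fin n → ℝ)
    (hstress : IsStress (B ∪ C ∪ S) p ω)
    (hproper : IsProperStress C S ω)
    (hpsd : (stressMatrix ω).PosSemidef) :
    ∀ (s : ℕ) (p' : Fin n → Fin s → ℝ), Dominates B C S p p' →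
      (∀ k, ∑ i, p' i k = 0) →
      IsStress (B ∪ C ∪ S) p' ω ∧ stressMatrix ω * Matrix.of p' = 0 := by
  intro s p' hdom hcen
  obtain ⟨hsym, hnon, hequil⟩ := hstress
  have hω0 : ∀ i, ω i i = 0 := fun i => hnon i i (hG.2.2.2.1 i)
  -- coordinate equilibrium for p
  have hpeq : ∀ (k : Fin r) (i : Fin n), ∑ j, ω i j * (p i k - p j k) = 0 := by
    intro k i
    have := congrFun (hequil i) k
    simpa [Finset.sum_apply, Pi.smul_apply, smul_eq_mul] using this
  -- energy of p is zero
  have hEp : ∀ k : Fin r, ∑ i, ∑ j, ω i j * (p i k - p j k) ^ 2 = 0 := by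
    intro k
    rw [aux_energy ω hsym hω0 (fun i => p i k)]
    have : ∀ i : Fin n, (stressMatrix ω *ᵥ fun i => p i k) i = 0 := fun i => by
      rw [aux_mulVec ω hω0]; exact hpeq k i
    simp [this]
  -- termwise comparison
  have hle : ∀ i j, ω i j * sqDist (p' i) (p' j) ≤ ω i j * sqDist (p i) (p j) := by
    intro i j
    by_cases hB : (i, j) ∈ B
    · rw [hdom.1 (i, j) hB]
    by_cases hC : (i, j) ∈ C
    · exact mul_le_mul_of_nonneg_left (hdom.2.1 (i, j) hC) (hproper.1 (i, j) hC)
    by_cases hS : (i, j) ∈ S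
    · exact mul_le_mul_of_nonpos_left (hdom.2.2 (i, j) hS) (hproper.2 (i, j) hS)
    · have : ω i j = 0 := hnon i j (by simp [Set.mem_union, hB, hC, hS])
      simp [this]
  -- total energy of p' is ≤ 0
  have hT : ∑ k, ∑ i, ∑ j, ω i j * (p' i k - p' j k) ^ 2 ≤ 0 := by
    have reorg : ∀ (m : ℕ) (q : Fin n → Fin m → ℝ),
        ∑ k, ∑ i, ∑ j, ω i j * (q i k - q j k) ^ 2
          = ∑ i, ∑ j, ω i j * sqDist (q i) (q j) := by
      intro m q
      rw [Finset.sum_comm]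
      refine Finset.sum_congr rfl fun i _ => ?_
      rw [Finset.sum_comm]
      refine Finset.sum_congr rfl fun j _ => ?_
      rw [sqDist, Finset.mul_sum]
    rw [reorg s p']
    calc ∑ i, ∑ j, ω i j * sqDist (p' i) (p' j)
        ≤ ∑ i, ∑ j, ω i j * sqDist (p i) (p j) :=
          Finset.sum_le_sum fun i _ => Finset.sum_le_sum fun j _ => hle i j
      _ = ∑ k, ∑ i, ∑ j, ω i j * (p i k - p j k) ^ 2 := (reorg r p).symm
      _ = 0 := by simp [hEp]
  -- each quadratic form is nonneg, hence zero
  have hQnonneg : ∀ k : Fin s, 0 ≤ ∑ i, p' i k * (stressMatrix ω *ᵥ fun i => p' i k) i := by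
    intro k
    have := hpsd.dotProduct_mulVec_nonneg (fun i => p' i k)
    simpa [dotProduct, star, mul_comm] using this
  have hsumQ : ∑ k, (2 * ∑ i, p' i k * (stressMatrix ω *ᵥ fun i => p' i k) i) ≤ 0 := by
    calc ∑ k, (2 * ∑ i, p' i k * (stressMatrix ω *ᵥ fun i => p' i k) i)
        = ∑ k, ∑ i, ∑ j, ω i j * (p' i k - p' j k) ^ 2 :=
          Finset.sum_congr rfl fun k _ => (aux_energy ω hsym hω0 (fun i => p' i k)).symm
      _ ≤ 0 := hT
  have hQzero : ∀ k : Fin s, ∑ i, p' i k * (stressMatrix ω *ᵥ fun i => p' i k) i = 0 := by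
    intro k
    have h1 : ∀ k ∈ Finset.univ (α := Fin s),
        0 ≤ 2 * ∑ i, p' i k * (stressMatrix ω *ᵥ fun i => p' i k) i :=
      fun k _ => by linarith [hQnonneg k]
    have h2 : ∑ k, (2 * ∑ i, p' i k * (stressMatrix ω *ᵥ fun i => p' i k) i) = 0 :=
      le_antisymm hsumQ (Finset.sum_nonneg h1)
    have := (Finset.sum_eq_zero_iff_of_nonneg h1).mp h2 k (Finset.mem_univ k)
    linarith
  -- Ω kills each column of p'
  have hcol : ∀ k : Fin s, stressMatrix ω *ᵥ (fun i => p' i k) = 0 := by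
    intro k
    have := (hpsd.dotProduct_mulVec_zero_iff (fun i => p' i k)).mp ?_
    · exact this
    · have : star (fun i => p' i k) = fun i => p' i k := by simp
      rw [this, dotProduct]
      exact hQzero k
  have hcol' : ∀ (k : Fin s) (i : Fin n), ∑ j, ω i j * (p' i k - p' j k) = 0 := by
    intro k i
    have := congrFun (hcol k) i
    rwa [aux_mulVec ω hω0] at this
  constructor
  · refine ⟨hsym, hnon, fun i => ?_⟩
    funext k
    simpa [Finset.sum_apply, Pi.smul_apply, smul_eq_mul] using hcol' k i
  · ext i k
    have := congrFun (hcol k) i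
    simpa [Matrix.mul_apply, Matrix.mulVec, dotProduct] using this
end
end

section
/- Let (G,p) be an r-dimensional tensegrity framework in ℝ^r and let Z be a Gale matrix of (G,p). Then there exists a tensegrity framework (G,p') affinely-dominated by, but not congruent to, (G,p) if and only if there exist a non-zero y = (y_ij) ∈ ℝ^{|Ē|+|C|+|S|} with y_ij ≥ 0 for all {i,j} ∈ C and y_ij ≤ 0 for all {i,j} ∈ S, and a vector ξ ∈ ℝ^{n−r−1}, such that ℰ(y) Z = e ξ^T. -/
open Matrix BigOperators

noncomputable section

section Helpers

variable {n r : ℕ}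

lemma sqDist_eq {r : ℕ} (x y : Fin r → ℝ) :
    sqDist x y = x ⬝ᵥ x + y ⬝ᵥ y - 2 * (x ⬝ᵥ y) := by
  simp only [sqDist, dotProduct, sub_sq, Finset.sum_add_distrib, Finset.sum_sub_distrib,
    Finset.mul_sum, ← pow_two]
  ring_nf

lemma sqDist_comm {r : ℕ} (x y : Fin r → ℝ) : sqDist x y = sqDist y x := by
  simp only [sqDist]; exact Finset.sum_congr rfl fun k _ => by ring

lemma sqDist_self {r : ℕ} (x : Fin r → ℝ) : sqDist x x = 0 := by simp [sqDist]

lemma EscrY_apply {n : ℕ} (y : Fin n → Fin n → ℝ) (a b : Fin n) :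
    EscrY y a b = y a b + y b a := by
  simp only [EscrY, Emat, Matrix.sum_apply, Matrix.add_apply, Matrix.smul_apply,
    Matrix.vecMulVec_apply, Pi.single_apply, smul_eq_mul]
  have key : ∀ i j : Fin n, y i j * ((if a = i then (1:ℝ) else 0) * (if b = j then 1 else 0) + (if a = j then 1 else 0) * (if b = i then 1 else 0)) = (if i = a then (if j = b then y i j else 0) else 0) + (if i = b then (if j = a then y i j else 0) else 0) := by
    intro i j
    by_cases h1 : a = i <;> by_cases h2 : b = j <;> by_cases h3 : a = j <;> by_cases h4 : b = i <;>
      simp_all <;> ring_nf <;> simp_all [eq_comm]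
  calc (∑ i, ∑ j, y i j * ((if a = i then (1:ℝ) else 0) * (if b = j then 1 else 0) + (if a = j then 1 else 0) * (if b = i then 1 else 0)))
      = ∑ i, ∑ j, ((if i = a then (if j = b then y i j else 0) else 0) + (if i = b then (if j = a then y i j else 0) else 0)) := by
        exact Finset.sum_congr rfl fun i _ => Finset.sum_congr rfl fun j _ => key i j
    _ = y a b + y b a := by
        simp [Finset.sum_add_distrib, Finset.sum_ite_eq]

lemma span_top {n r : ℕ} (p : Fin n → Fin r → ℝ)
    (hdim : affineSpan ℝ (Set.range p) = ⊤) :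
    Submodule.span ℝ (Set.range p) = ⊤ := by
  have h1 : vectorSpan ℝ (Set.range p) = ⊤ := by
    rw [← direction_affineSpan, hdim]; exact AffineSubspace.direction_top ℝ _ _
  rw [eq_top_iff, ← h1, vectorSpan_def]
  refine Submodule.span_le.2 ?_
  rintro v ⟨a, ⟨i, rfl⟩, b, ⟨j, rfl⟩, rfl⟩
  exact sub_mem (Submodule.subset_span ⟨i, rfl⟩) (Submodule.subset_span ⟨j, rfl⟩)


lemma dot_sum_zero {n r : ℕ} (v : Fin n → ℝ) (w : Fin n → Fin r → ℝ) (u : Fin r → ℝ)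
    (h : ∑ j, v j • w j = 0) : ∑ j, (u ⬝ᵥ w j) * v j = 0 := by
  have h0 : ∀ m, ∑ j, v j * w j m = 0 := fun m => by simpa using congrFun h m
  calc ∑ j, (u ⬝ᵥ w j) * v j = ∑ j, ∑ m, u m * (v j * w j m) := by
        refine Finset.sum_congr rfl fun j _ => ?_
        rw [dotProduct, Finset.sum_mul]
        exact Finset.sum_congr rfl fun m _ => by ring
    _ = ∑ m, u m * ∑ j, v j * w j m := by
        rw [Finset.sum_comm]; simp [Finset.mul_sum]
    _ = 0 := by simp [h0]

lemma forward_dir {n r : ℕ}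
    (B C S : Set (Fin n × Fin n)) (hG : TensegrityGraph B C S)
    (p : Fin n → Fin r → ℝ)
    (Z : Matrix (Fin n) (Fin (n - r - 1)) ℝ)
    (hZ : IsGaleMatrix (Matrix.of p) Z)
    (p' : Fin n → Fin r → ℝ)
    (had : AffinelyDominated B C S p p') (hnc : ¬ FrameworkCongruent p p') :
    ∃ y : Fin n → Fin n → ℝ, y ≠ 0 ∧
        (∀ i j, y i j ≠ 0 →
          i < j ∧ ((i, j) ∉ B ∪ C ∪ S ∨ (i, j) ∈ C ∨ (i, j) ∈ S)) ∧
        (∀ i j, (i, j) ∈ C → 0 ≤ y i j) ∧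
        (∀ i j, (i, j) ∈ S → y i j ≤ 0) ∧
        ∃ ξ : Fin (n - r - 1) → ℝ,
          EscrY y * Z = Matrix.vecMulVec (fun _ => 1) ξ := by
  obtain ⟨⟨hbar, hcab, hstr⟩, A, b, hq⟩ := had
  set d : Fin n → Fin n → ℝ :=
    fun i j => sqDist (p' i) (p' j) - sqDist (p i) (p j) with hd_def
  set f : Fin n → ℝ := fun i => p' i ⬝ᵥ p' i - p i ⬝ᵥ p i with hf_def
  have hd : ∀ i j, d i j = f i + f j - 2 * ((p' i ⬝ᵥ p' j) - (p i ⬝ᵥ p j)) := by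
    intro i j; simp only [hd_def, hf_def, sqDist_eq]; ring
  have hdsymm : ∀ i j, d i j = d j i := by
    intro i j; simp only [hd_def, sqDist_comm (p' i), sqDist_comm (p i)]
  have hdself : ∀ i, d i i = 0 := by intro i; simp [hd_def, sqDist_self]
  refine ⟨fun i j => if i < j then -(d i j) else 0, ?_, ?_, ?_, ?_, ?_⟩
  · -- nonzero
    simp only [FrameworkCongruent, not_forall] at hnc
    obtain ⟨i, j, hij⟩ := hnc
    have hij' : d i j ≠ 0 := sub_ne_zero.2 hij
    intro h0
    rcases lt_trichotomy i j with h | h | h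
    · have := congrFun (congrFun h0 i) j
      simp only [if_pos h, Pi.zero_apply, neg_eq_zero] at this
      exact hij' this
    · exact hij' (h ▸ hdself i)
    · have := congrFun (congrFun h0 j) i
      simp only [if_pos h, Pi.zero_apply, neg_eq_zero] at this
      exact hij' ((hdsymm i j).trans this)
  · -- support
    intro i j hne
    by_cases hij : i < j
    · refine ⟨hij, ?_⟩
      by_cases hC : (i, j) ∈ C
      · exact Or.inr (Or.inl hC)
      by_cases hS : (i, j) ∈ S
      · exact Or.inr (Or.inr hS)
      by_cases hB : (i, j) ∈ B
      · exfalso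
        have : d i j = 0 := sub_eq_zero.2 (hbar (i, j) hB)
        simp only [if_pos hij, this, neg_zero, ne_eq, not_true_eq_false] at hne
      · refine Or.inl ?_
        simp only [Set.mem_union]
        rintro ((h | h) | h) <;> [exact hB h; exact hC h; exact hS h]
    · simp only [if_neg hij, ne_eq, not_true_eq_false] at hne
  · -- cables
    intro i j hC
    by_cases hij : i < j
    · have := hcab (i, j) hC
      simp only [if_pos hij, hd_def]
      simp only [le_neg, neg_zero, neg_sub]
      linarith
    · simp [if_neg hij]
  · -- struts
    intro i j hS
    by_cases hij : i < j
    · have := hstr (i, j) hS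
      simp only [if_pos hij]
      simp only [neg_le, neg_zero, hd_def]
      linarith
    · simp [if_neg hij]
  · -- the matrix identity
    refine ⟨fun k => -∑ j, f j * Z j k, ?_⟩
    have hM : ∀ i j : Fin n,
        (fun i j => if i < j then -(d i j) else 0) i j +
          (fun i j => if i < j then -(d i j) else 0) j i = -(d i j) := by
      intro i j
      rcases lt_trichotomy i j with h | h | h
      · simp [if_pos h, if_neg (asymm h)]
      · subst h; simp [hdself i, lt_irrefl]
      · simp [if_neg (asymm h), if_pos h, hdsymm i j]
    ext i k
    have hZcol : ∑ j, Z j k = 0 := hZ.2.1 k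
    have hPZ : ∀ m, ∑ j, p j m * Z j k = 0 := by
      intro m
      have := congrFun (hZ.1 k) m
      simpa [Matrix.mulVec, dotProduct, Matrix.transpose_apply] using this
    have hsumP : (∑ j, Z j k • p j) = 0 := by
      ext m
      simp only [Finset.sum_apply, Pi.smul_apply, smul_eq_mul, Pi.zero_apply]
      simpa [mul_comm] using hPZ m
    have hsumQ : (∑ j, Z j k • p' j) = 0 := by
      have : ∀ j, Z j k • p' j = A.mulVecLin (Z j k • p j) + Z j k • b := by
        intro j
        rw [hq j, smul_add]
        congr 1
        simp [Matrix.mulVecLin, Matrix.mulVec_smul]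
      rw [Finset.sum_congr rfl fun j _ => this j, Finset.sum_add_distrib,
        ← map_sum, hsumP, map_zero, ← Finset.sum_smul, hZcol, zero_add, zero_smul]
    have claim2 : ∑ j, (p' i ⬝ᵥ p' j) * Z j k = 0 :=
      dot_sum_zero (fun j => Z j k) p' (p' i) hsumQ
    have claim1 : ∑ j, (p i ⬝ᵥ p j) * Z j k = 0 :=
      dot_sum_zero (fun j => Z j k) p (p i) hsumP
    have step : ∀ j, EscrY (fun i j => if i < j then -(d i j) else 0) i j * Z j k =
        (-f i) * Z j k - f j * Z j k + 2 * ((p' i ⬝ᵥ p' j) * Z j k)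
          - 2 * ((p i ⬝ᵥ p j) * Z j k) := by
      intro j
      rw [EscrY_apply, hM i j, hd i j]
      ring
    rw [Matrix.mul_apply, Finset.sum_congr rfl fun j _ => step j]
    simp only [Finset.sum_add_distrib, Finset.sum_sub_distrib, ← Finset.mul_sum,
      hZcol, claim1, claim2, Matrix.vecMulVec_apply]
    ring

lemma mulVec_inj {n r : ℕ} (p : Fin n → Fin r → ℝ)
    (hspan : Submodule.span ℝ (Set.range p) = ⊤)
    (x : Fin r → ℝ) (h : ∀ i, p i ⬝ᵥ x = 0) : x = 0 := by
  let f : (Fin r → ℝ) →ₗ[ℝ] ℝ :=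
    { toFun := fun v => v ⬝ᵥ x
      map_add' := fun a b => add_dotProduct a b x
      map_smul' := fun c a => smul_dotProduct c a x }
  have hker : Submodule.span ℝ (Set.range p) ≤ LinearMap.ker f := by
    rw [Submodule.span_le]
    rintro _ ⟨i, rfl⟩
    exact h i
  have hx : x ∈ LinearMap.ker f := hker (hspan ▸ Submodule.mem_top)
  exact dotProduct_self_eq_zero.mp hx

open scoped MatrixOrder in
lemma exists_psd_sqrt {r : ℕ} (T : Matrix (Fin r) (Fin r) ℝ) (hT : T.PosSemidef) :
    ∃ A : Matrix (Fin r) (Fin r) ℝ, A * A = T ∧ Aᵀ = A := by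
  refine ⟨CFC.sqrt T, CFC.sqrt_mul_sqrt_self T hT.nonneg, ?_⟩
  have h := (CFC.sqrt_nonneg T).posSemidef.1
  ext a b
  simpa [Matrix.conjTranspose_apply] using congrFun (congrFun h a) b

set_option maxHeartbeats 1000000 in
lemma backward_dir {n r : ℕ}
    (B C S : Set (Fin n × Fin n)) (hG : TensegrityGraph B C S)
    (p : Fin n → Fin r → ℝ)
    (hdim : affineSpan ℝ (Set.range p) = ⊤)
    (hcentroid : ∀ k, ∑ i, p i k = 0)
    (Z : Matrix (Fin n) (Fin (n - r - 1)) ℝ)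
    (hZ : IsGaleMatrix (Matrix.of p) Z)
    (y : Fin n → Fin n → ℝ) (hy0 : y ≠ 0)
    (hsupp : ∀ i j, y i j ≠ 0 →
      i < j ∧ ((i, j) ∉ B ∪ C ∪ S ∨ (i, j) ∈ C ∨ (i, j) ∈ S))
    (hyC : ∀ i j, (i, j) ∈ C → 0 ≤ y i j)
    (hyS : ∀ i j, (i, j) ∈ S → y i j ≤ 0)
    (ξ : Fin (n - r - 1) → ℝ)
    (hξ : EscrY y * Z = Matrix.vecMulVec (fun _ => 1) ξ) :
    ∃ p' : Fin n → Fin r → ℝ, AffinelyDominated B C S p p' ∧ ¬ FrameworkCongruent p p' := by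
  classical
  obtain ⟨i0, j0, hy00⟩ : ∃ i j, y i j ≠ 0 := by
    obtain ⟨i, hi⟩ := Function.ne_iff.1 hy0
    obtain ⟨j, hj⟩ := Function.ne_iff.1 hi
    exact ⟨i, j, hj⟩
  have hnpos : 0 < n := i0.pos
  have hn : (n : ℝ) ≠ 0 := Nat.cast_ne_zero.2 hnpos.ne'
  have hy_lt : ∀ a b, ¬ a < b → y a b = 0 := by
    intro a b h
    by_contra h'
    exact h (hsupp a b h').1
  set M : Fin n → Fin n → ℝ := fun a b => y a b + y b a with hM_def
  have hMsymm : ∀ a b, M a b = M b a := fun a b => add_comm _ _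
  have hMdiag : ∀ a, M a a = 0 := by
    intro a
    simp [hM_def, hy_lt a a (lt_irrefl a)]
  set g : Fin n → ℝ := fun a => ∑ b, M a b with hg_def
  set s : ℝ := ∑ a, g a with hs_def
  set x : Fin n → ℝ := fun a => -(1 / (n : ℝ)) * g a + (1 / (2 * (n : ℝ) ^ 2)) * s
    with hx_def
  have hsumx : ∑ b, x b = -(1 / (2 * (n : ℝ))) * s := by
    simp only [hx_def, Finset.sum_add_distrib, ← Finset.sum_neg_distrib]
    rw [← Finset.mul_sum, ← hs_def, Finset.sum_const, Finset.card_univ,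
      Fintype.card_fin, nsmul_eq_mul]
    field_simp
    ring
  set N : Fin n → Fin n → ℝ := fun a b => M a b + x a + x b with hN_def
  have hNsymm : ∀ a b, N a b = N b a := by
    intro a b; simp only [hN_def, hMsymm a b]; ring
  have hNe : ∀ a, ∑ b, N a b = 0 := by
    intro a
    have hga : ∑ b, M a b = g a := rfl
    simp only [hN_def, Finset.sum_add_distrib, hsumx, Finset.sum_const,
      Finset.card_univ, Fintype.card_fin, nsmul_eq_mul]
    rw [hga]
    simp only [hx_def]
    field_simp
    ring
  have hMrow : ∀ a k, ∑ b, M a b * Z b k = ξ k := by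
    intro a k
    have := congrFun (congrFun hξ a) k
    rw [Matrix.mul_apply] at this
    simp only [Matrix.vecMulVec_apply, one_mul] at this
    rw [← this]
    exact Finset.sum_congr rfl fun b _ => by rw [EscrY_apply]
  have hZcol : ∀ k, ∑ j, Z j k = 0 := hZ.2.1
  have hPZ : ∀ k m, ∑ j, p j m * Z j k = 0 := by
    intro k m
    have := congrFun (hZ.1 k) m
    simpa [Matrix.mulVec, dotProduct, Matrix.transpose_apply] using this
  have hNZ : ∀ a k, ∑ b, N a b * Z b k = 0 := by
    intro a k
    set η : ℝ := ξ k + ∑ b, x b * Z b k with hη_def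
    have step1 : ∀ a', ∑ b, N a' b * Z b k = η := by
      intro a'
      simp only [hN_def, add_mul, Finset.sum_add_distrib]
      rw [hMrow a' k, ← Finset.mul_sum, hZcol k, mul_zero, add_zero, hη_def]
    have step2 : (n : ℝ) * η = 0 := by
      have h1 : ∑ a' : Fin n, (∑ b, N a' b * Z b k) = (n : ℝ) * η := by
        rw [Finset.sum_congr rfl fun a' _ => step1 a', Finset.sum_const,
          Finset.card_univ, Fintype.card_fin, nsmul_eq_mul]
      have h2 : ∑ a' : Fin n, (∑ b, N a' b * Z b k) = 0 := by
        rw [Finset.sum_comm]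
        refine Finset.sum_eq_zero fun b _ => ?_
        rw [← Finset.sum_mul]
        rw [Finset.sum_congr rfl fun a' _ => hNsymm a' b, hNe b, zero_mul]
      rw [← h1, h2]
    have hη : η = 0 := by
      rcases mul_eq_zero.1 step2 with h | h
      · exact absurd h hn
      · exact h
    rw [step1 a, hη]
  -- invertibility of the Gram matrix
  have hspan : Submodule.span ℝ (Set.range p) = ⊤ := span_top p hdim
  set P : Matrix (Fin n) (Fin r) ℝ := Matrix.of p with hP_def
  set G : Matrix (Fin r) (Fin r) ℝ := Pᵀ * P with hG_def
  have hGsymm : Gᵀ = G := by rw [hG_def, Matrix.transpose_mul, Matrix.transpose_transpose]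
  have hGinj : ∀ w, G *ᵥ w = 0 → w = 0 := by
    intro w hw
    have key : w ⬝ᵥ (Pᵀ *ᵥ (P *ᵥ w)) = (P *ᵥ w) ⬝ᵥ (P *ᵥ w) := by
      rw [dotProduct_mulVec, Matrix.vecMul_transpose]
    have h1 : (P *ᵥ w) ⬝ᵥ (P *ᵥ w) = 0 := by
      rw [← key, Matrix.mulVec_mulVec, show Pᵀ * P = G from rfl, hw,
        dotProduct_zero]
    have h2 : P *ᵥ w = 0 := dotProduct_self_eq_zero.mp h1
    refine mulVec_inj p hspan w fun i => ?_
    exact congrFun h2 i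
  have hdet : IsUnit G.det := by
    rw [isUnit_iff_ne_zero]
    intro h
    obtain ⟨v, hv, hv0⟩ := Matrix.exists_mulVec_eq_zero_iff.2 h
    exact hv (hGinj v hv0)
  -- each row of N is in the column space of P
  have hrow : ∀ a, ∃ w : Fin r → ℝ, ∀ b, N a b = p b ⬝ᵥ w := by
    intro a
    set v : Fin n → ℝ := fun b => N a b with hv_def
    set u : Fin r → ℝ := Pᵀ *ᵥ v with hu_def
    set w : Fin r → ℝ := G⁻¹ *ᵥ u with hw_def
    have hGw : G *ᵥ w = u := by
      rw [hw_def, Matrix.mulVec_mulVec, Matrix.mul_nonsing_inv _ hdet, Matrix.one_mulVec]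
    set v' : Fin n → ℝ := v - P *ᵥ w with hv'_def
    have hPv' : Pᵀ *ᵥ v' = 0 := by
      rw [hv'_def, Matrix.mulVec_sub, Matrix.mulVec_mulVec, ← hG_def, hGw, ← hu_def,
        sub_self]
    have hsum_v' : ∑ b, v' b = 0 := by
      simp only [hv'_def, Pi.sub_apply, Finset.sum_sub_distrib]
      have h1 : ∑ b, v b = 0 := hNe a
      have h2 : ∑ b, (P *ᵥ w) b = 0 := by
        simp only [Matrix.mulVec, dotProduct]
        rw [Finset.sum_comm]
        refine Finset.sum_eq_zero fun m _ => ?_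
        rw [← Finset.sum_mul]
        exact mul_eq_zero_of_left (hcentroid m) (w m)
      rw [h1, h2, sub_zero]
    have hmem := hZ.2.2.2 v' hPv' hsum_v'
    rw [Submodule.mem_span_range_iff_exists_fun] at hmem
    obtain ⟨c, hc⟩ := hmem
    have hZv' : ∀ m, ∑ b, Z b m * v' b = 0 := by
      intro m
      simp only [hv'_def, Pi.sub_apply, mul_sub, Finset.sum_sub_distrib]
      have h1 : ∑ b, Z b m * v b = 0 := by
        rw [Finset.sum_congr rfl fun b _ => mul_comm (Z b m) (v b)]
        exact hNZ a m
      have h2 : ∑ b, Z b m * (P *ᵥ w) b = 0 := by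
        simp only [Matrix.mulVec, dotProduct, Finset.mul_sum]
        rw [Finset.sum_comm]
        refine Finset.sum_eq_zero fun l _ => ?_
        show ∑ b : Fin n, Z b m * (p b l * w l) = 0
        have heq : ∑ b, Z b m * (p b l * w l) = (∑ b, p b l * Z b m) * w l := by
          rw [Finset.sum_mul]
          exact Finset.sum_congr rfl fun b _ => by ring
        rw [heq, hPZ m l, zero_mul]
      rw [h1, h2, sub_zero]
    have hv'0 : v' = 0 := by
      refine dotProduct_self_eq_zero.mp ?_
      have : v' ⬝ᵥ v' = ∑ m, c m * (∑ b, Z b m * v' b) := by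
        nth_rewrite 1 [← hc]
        simp only [dotProduct, Finset.sum_apply, Pi.smul_apply, smul_eq_mul,
          Finset.sum_mul, Finset.mul_sum]
        rw [Finset.sum_comm]
        exact Finset.sum_congr rfl fun m _ => Finset.sum_congr rfl fun b _ => by ring
      rw [this]
      exact Finset.sum_eq_zero fun m _ => by rw [hZv' m, mul_zero]
    refine ⟨w, fun b => ?_⟩
    have hb := congrFun hv'0 b
    simp only [hv'_def, Pi.sub_apply, Pi.zero_apply, sub_eq_zero] at hb
    calc N a b = v b := rfl
      _ = (P *ᵥ w) b := hb
      _ = p b ⬝ᵥ w := rfl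
  choose w hw using hrow
  -- the symmetric matrix Φ
  set Nmat : Matrix (Fin n) (Fin n) ℝ := Matrix.of N with hNmat_def
  have hNmatsymm : Nmatᵀ = Nmat := by
    ext a b; exact hNsymm b a
  set W : Matrix (Fin n) (Fin r) ℝ := Matrix.of w with hW_def
  have hNfact : Nmat = W * Pᵀ := by
    ext a b
    rw [Matrix.mul_apply]
    simpa [dotProduct, hW_def, hP_def, hNmat_def, mul_comm] using hw a b
  set Φ : Matrix (Fin r) (Fin r) ℝ := G⁻¹ * (Pᵀ * Nmat * P) * G⁻¹ with hΦ_def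
  have hΦsymm : Φᵀ = Φ := by
    rw [hΦ_def]
    simp only [Matrix.transpose_mul, Matrix.transpose_nonsing_inv, hGsymm,
      Matrix.transpose_transpose, hNmatsymm]
    simp only [Matrix.mul_assoc]
  have hPΦP : P * Φ * Pᵀ = Nmat := by
    have h1 : P * Φ * Pᵀ = P * G⁻¹ * Pᵀ * Nmat * (P * G⁻¹ * Pᵀ) := by
      rw [hΦ_def]
      simp only [← Matrix.mul_assoc]
    have hQP : P * G⁻¹ * Pᵀ * Nmat = Nmat := by
      calc P * G⁻¹ * Pᵀ * Nmat = P * G⁻¹ * Pᵀ * Nmatᵀ := by rw [hNmatsymm]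
        _ = P * G⁻¹ * Pᵀ * (P * Wᵀ) := by
            rw [hNfact, Matrix.transpose_mul, Matrix.transpose_transpose]
        _ = P * (G⁻¹ * G) * Wᵀ := by
            rw [hG_def]
            simp only [Matrix.mul_assoc]
        _ = P * Wᵀ := by rw [Matrix.nonsing_inv_mul _ hdet, Matrix.mul_one]
        _ = Nmat := by
            rw [← hNmatsymm, hNfact, Matrix.transpose_mul, Matrix.transpose_transpose]
    have hQP2 : Nmat * (P * G⁻¹ * Pᵀ) = Nmat := by
      have h := congrArg Matrix.transpose hQP
      simp only [Matrix.transpose_mul, Matrix.transpose_nonsing_inv, hGsymm,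
        Matrix.transpose_transpose, hNmatsymm] at h
      simp only [Matrix.mul_assoc] at h ⊢
      exact h
    rw [h1, hQP, hQP2]
  have hPN : ∀ a b, p a ⬝ᵥ (Φ *ᵥ p b) = N a b := by
    intro a b
    have h := congrFun (congrFun hPΦP a) b
    have h2 : (P * Φ * Pᵀ) a b = N a b := h
    rw [← h2, Matrix.mul_assoc, Matrix.mul_apply]
    show ∑ m, p a m * (Φ *ᵥ p b) m = ∑ m, p a m * (Φ * (Matrix.of p)ᵀ) m b
    refine Finset.sum_congr rfl fun m _ => ?_
    rfl
  have quad : ∀ i j, (p i - p j) ⬝ᵥ (Φ *ᵥ (p i - p j)) = -2 * (y i j + y j i) := by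
    intro i j
    rw [Matrix.mulVec_sub, sub_dotProduct, dotProduct_sub,
      dotProduct_sub, hPN i i, hPN i j, hPN j i, hPN j j]
    simp only [hN_def, hM_def]
    have h1 : y i i = 0 := hy_lt i i (lt_irrefl i)
    have h2 : y j j = 0 := hy_lt j j (lt_irrefl j)
    rw [h1, h2]
    ring
  -- the positive semidefinite matrix T and its square root
  set c : ℝ := ∑ k, ∑ l, |Φ k l| with hc_def
  have hc : 0 ≤ c := Finset.sum_nonneg fun k _ => Finset.sum_nonneg fun l _ => abs_nonneg _
  set ε : ℝ := 1 / (1 + c) with hε_def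
  have hε : 0 < ε := by positivity
  have hεc : ε * c ≤ 1 := by
    rw [hε_def, div_mul_eq_mul_div, one_mul, div_le_one (by linarith)]
    linarith
  set T : Matrix (Fin r) (Fin r) ℝ := 1 + ε • Φ with hT_def
  have hquadbound : ∀ v : Fin r → ℝ, |v ⬝ᵥ (Φ *ᵥ v)| ≤ c * (v ⬝ᵥ v) := by
    intro v
    have hvv : 0 ≤ v ⬝ᵥ v := Finset.sum_nonneg fun k _ => mul_self_nonneg _
    have hsq : ∀ k l, |v k| * |v l| ≤ v ⬝ᵥ v := by
      intro k l
      have h1 : v k ^ 2 ≤ v ⬝ᵥ v := by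
        have := Finset.single_le_sum (f := fun m => v m * v m)
          (fun m _ => mul_self_nonneg (v m)) (Finset.mem_univ k)
        simpa [pow_two, dotProduct] using this
      have h2 : v l ^ 2 ≤ v ⬝ᵥ v := by
        have := Finset.single_le_sum (f := fun m => v m * v m)
          (fun m _ => mul_self_nonneg (v m)) (Finset.mem_univ l)
        simpa [pow_two, dotProduct] using this
      nlinarith [abs_nonneg (v k), abs_nonneg (v l), sq_abs (v k), sq_abs (v l)]
    have hform : v ⬝ᵥ (Φ *ᵥ v) = ∑ k, ∑ l, Φ k l * (v k * v l) := by
      simp only [dotProduct, Matrix.mulVec, dotProduct, Finset.mul_sum]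
      exact Finset.sum_congr rfl fun k _ => Finset.sum_congr rfl fun l _ => by ring
    rw [hform]
    calc |∑ k, ∑ l, Φ k l * (v k * v l)| ≤ ∑ k, |∑ l, Φ k l * (v k * v l)| :=
          Finset.abs_sum_le_sum_abs _ _
      _ ≤ ∑ k, ∑ l, |Φ k l * (v k * v l)| :=
          Finset.sum_le_sum fun k _ => Finset.abs_sum_le_sum_abs _ _
      _ ≤ ∑ k, ∑ l, |Φ k l| * (v ⬝ᵥ v) := by
          refine Finset.sum_le_sum fun k _ => Finset.sum_le_sum fun l _ => ?_
          rw [abs_mul, abs_mul]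
          exact mul_le_mul_of_nonneg_left (hsq k l) (abs_nonneg _)
      _ = c * (v ⬝ᵥ v) := by
          rw [hc_def, Finset.sum_mul]
          exact Finset.sum_congr rfl fun k _ => (Finset.sum_mul _ _ _).symm
  have hpsd : T.PosSemidef := by
    refine Matrix.PosSemidef.of_dotProduct_mulVec_nonneg ?_ ?_
    · show Tᴴ = T
      have hΦH : Φᴴ = Φ := by
        ext a b
        simp only [Matrix.conjTranspose_apply, star_trivial]
        exact congrFun (congrFun hΦsymm a) b
      rw [hT_def, Matrix.conjTranspose_add, Matrix.conjTranspose_one,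
        Matrix.conjTranspose_smul, hΦH]
      simp
    · intro v
      have hvv : 0 ≤ v ⬝ᵥ v := Finset.sum_nonneg fun k _ => mul_self_nonneg _
      have hb := abs_le.1 (hquadbound v)
      have hform : star v ⬝ᵥ (T *ᵥ v) = v ⬝ᵥ v + ε * (v ⬝ᵥ (Φ *ᵥ v)) := by
        have hstar : star v = v := by
          funext k; exact star_trivial _
        rw [hstar, hT_def, Matrix.add_mulVec, Matrix.one_mulVec, dotProduct_add,
          Matrix.smul_mulVec, dotProduct_smul, smul_eq_mul]
      rw [hform]
      have f1 := mul_le_mul_of_nonneg_left hb.1 hε.le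
      have f2 := mul_le_mul_of_nonneg_right hεc hvv
      have f3 : ε * (-(c * (v ⬝ᵥ v))) = -(ε * c * (v ⬝ᵥ v)) := by ring
      linarith [f1, f2, f3]
  obtain ⟨A, hAA, hAsym⟩ := exists_psd_sqrt T hpsd
  set q : Fin n → Fin r → ℝ := fun i => A *ᵥ p i with hq_def
  have hsqd : ∀ (u u' : Fin r → ℝ), sqDist u u' = (u - u') ⬝ᵥ (u - u') := by
    intro u u'
    simp only [sqDist, dotProduct, Pi.sub_apply, pow_two]
  have hdist : ∀ i j, sqDist (q i) (q j) =
      sqDist (p i) (p j) + ε * (-2 * (y i j + y j i)) := by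
    intro i j
    rw [hsqd, hsqd]
    have hsub : q i - q j = A *ᵥ (p i - p j) := (Matrix.mulVec_sub A _ _).symm
    rw [hsub]
    have hvm : (p i - p j) ᵥ* A = A *ᵥ (p i - p j) := by
      rw [← Matrix.mulVec_transpose, hAsym]
    have h1 : (A *ᵥ (p i - p j)) ⬝ᵥ (A *ᵥ (p i - p j)) =
        (p i - p j) ⬝ᵥ (T *ᵥ (p i - p j)) := by
      calc (A *ᵥ (p i - p j)) ⬝ᵥ (A *ᵥ (p i - p j))
          = ((p i - p j) ᵥ* A) ⬝ᵥ (A *ᵥ (p i - p j)) := by rw [hvm]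
        _ = (p i - p j) ⬝ᵥ (A *ᵥ (A *ᵥ (p i - p j))) :=
            (dotProduct_mulVec (p i - p j) A (A *ᵥ (p i - p j))).symm
        _ = (p i - p j) ⬝ᵥ (T *ᵥ (p i - p j)) := by rw [Matrix.mulVec_mulVec, hAA]
    rw [h1, hT_def, Matrix.add_mulVec, Matrix.one_mulVec, dotProduct_add,
      Matrix.smul_mulVec, dotProduct_smul, smul_eq_mul, quad i j]
  have hyB : ∀ i j, (i, j) ∈ B → y i j = 0 := by
    intro i j hB
    by_contra h'
    rcases (hsupp i j h').2 with h | h | h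
    · exact h (Or.inl (Or.inl hB))
    · exact Set.eq_empty_iff_forall_notMem.1 hG.2.2.2.2.1 (i, j) ⟨hB, h⟩
    · exact Set.eq_empty_iff_forall_notMem.1 hG.2.2.2.2.2.1 (i, j) ⟨hB, h⟩
  refine ⟨q, ⟨⟨?_, ?_, ?_⟩, A, 0, fun i => by simp [hq_def]⟩, ?_⟩
  · intro e he
    rw [hdist e.1 e.2]
    have h1 : y e.1 e.2 = 0 := hyB e.1 e.2 (by simpa using he)
    have h2 : y e.2 e.1 = 0 := hyB e.2 e.1 (hG.1 e.1 e.2 (by simpa using he))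
    rw [h1, h2]
    ring
  · intro e he
    rw [hdist e.1 e.2]
    have h1 : 0 ≤ y e.1 e.2 := hyC e.1 e.2 (by simpa using he)
    have h2 : 0 ≤ y e.2 e.1 := hyC e.2 e.1 (hG.2.1 e.1 e.2 (by simpa using he))
    nlinarith [mul_nonneg hε.le (add_nonneg h1 h2)]
  · intro e he
    rw [hdist e.1 e.2]
    have h1 : y e.1 e.2 ≤ 0 := hyS e.1 e.2 (by simpa using he)
    have h2 : y e.2 e.1 ≤ 0 := hyS e.2 e.1 (hG.2.2.1 e.1 e.2 (by simpa using he))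
    nlinarith [mul_nonpos_of_nonneg_of_nonpos hε.le (add_nonpos h1 h2)]
  · intro hc
    have h := hc i0 j0
    have hji : y j0 i0 = 0 := hy_lt j0 i0 (hsupp i0 j0 hy00).1.asymm
    have hd := hdist i0 j0
    rw [h] at hd
    have h0 : ε * (-2 * (y i0 j0 + y j0 i0)) = 0 := by linarith
    rw [hji, add_zero] at h0
    rcases mul_eq_zero.1 h0 with h' | h'
    · exact hε.ne' h'
    · exact hy00 (by linarith)


end Helpers

/-- Gale-matrix characterization: there is a framework
affinely-dominated by but not congruent to `(G,p)` iff there are a non-zero `y`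
supported on `Ē ∪ C ∪ S` (with the proper signs) and `ξ` with `ℰ(y) Z = e ξᵀ`. -/
theorem statement14 {n r : ℕ}
    (B C S : Set (Fin n × Fin n)) (hG : TensegrityGraph B C S)
    (p : Fin n → Fin r → ℝ)
    (hdim : affineSpan ℝ (Set.range p) = ⊤)
    (hcentroid : ∀ k, ∑ i, p i k = 0)
    (Z : Matrix (Fin n) (Fin (n - r - 1)) ℝ)
    (hZ : IsGaleMatrix (Matrix.of p) Z) :
    (∃ p' : Fin n → Fin r → ℝ,
        AffinelyDominated B C S p p' ∧ ¬ FrameworkCongruent p p') ↔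
      ∃ y : Fin n → Fin n → ℝ, y ≠ 0 ∧
        (∀ i j, y i j ≠ 0 →
          i < j ∧ ((i, j) ∉ B ∪ C ∪ S ∨ (i, j) ∈ C ∨ (i, j) ∈ S)) ∧
        (∀ i j, (i, j) ∈ C → 0 ≤ y i j) ∧
        (∀ i j, (i, j) ∈ S → y i j ≤ 0) ∧
        ∃ ξ : Fin (n - r - 1) → ℝ,
          EscrY y * Z = Matrix.vecMulVec (fun _ => 1) ξ := by
  constructor
  · rintro ⟨p', had, hnc⟩
    exact forward_dir B C S hG p Z hZ p' had hnc
  · rintro ⟨y, h1, h2, h3, h4, ξ, h5⟩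
    exact backward_dir B C S hG p hdim hcentroid Z hZ y h1 h2 h3 h4 ξ h5
end
end
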